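/- arXiv:1509.03758 — 3 statements merged into one kernel-verified Lean document; each statement's English description precedes it below -/
import Mathlib

section
/- Let 0 < t < 1. Then the measure μ^B_t = Σ_{k=0}^∞ (1−t)·t^k·δ_{(2k+1)(1−t)} is a probability measure on ℝ, and for every n ≥ 0 its n-th moment equals the Eulerian polynomial of type B evaluated at t: Σ_{k=0}^∞ (1−t)^{n+1} (2k+1)^n t^k = P^B_n(t). -/
open MeasureTheory Finset

/-- Number of descents of a finite sequence given as a list. -/
def descCount {α : Type*} [LT α] [DecidableRel ((· < ·) : α → α → Prop)] : List α → ℕ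
  | a :: b :: rest => (if b < a then 1 else 0) + descCount (b :: rest)
  | _ => 0

/-- Type A Eulerian number: permutations of {1,…,n} with k descents. -/
def eulerianA (n k : ℕ) : ℕ :=
  Fintype.card {σ : Equiv.Perm (Fin n) // descCount (List.ofFn fun i => σ i) = k}

/-- Eulerian polynomial of type A. -/
noncomputable def polyA (n : ℕ) (t : ℝ) : ℝ :=
  ∑ k ∈ Finset.range (n + 1), (eulerianA n k : ℝ) * t ^ k

/-- The underlying set {-n, …, -1, 0, 1, …, n}. -/
abbrev BSet (n : ℕ) : Type := {x : ℤ // x ∈ Finset.Icc (-(n : ℤ)) (n : ℤ)}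

def negB {n : ℕ} (x : BSet n) : BSet n :=
  ⟨-x.1, by have := x.2; simp only [Finset.mem_Icc] at *; omega⟩

def posB {n : ℕ} (i : Fin n) : BSet n :=
  ⟨((i : ℕ) : ℤ) + 1, by have := i.isLt; simp only [Finset.mem_Icc]; omega⟩

/-- A permutation of {-n,…,n} is a signed permutation if σ(-k) = -σ(k). -/
def IsSigned {n : ℕ} (σ : Equiv.Perm (BSet n)) : Prop :=
  ∀ x : BSet n, (σ (negB x)).1 = -((σ x).1)

noncomputable instance {n : ℕ} (σ : Equiv.Perm (BSet n)) : Decidable (IsSigned σ) :=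
  inferInstanceAs (Decidable (∀ x : BSet n, (σ (negB x)).1 = -((σ x).1)))

/-- Number of descents of the sequence (0, σ(1), …, σ(n)). -/
def descB {n : ℕ} (σ : Equiv.Perm (BSet n)) : ℕ :=
  descCount ((0 : ℤ) :: List.ofFn fun i : Fin n => (σ (posB i)).1)

/-- Number of negative terms among σ(1), …, σ(n). -/
def negCount {n : ℕ} (σ : Equiv.Perm (BSet n)) : ℕ :=
  (Finset.univ.filter fun i : Fin n => (σ (posB i)).1 < 0).card

/-- Type B Eulerian number. -/
noncomputable def eulerianB (n k : ℕ) : ℕ :=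
  Fintype.card {σ : Equiv.Perm (BSet n) // IsSigned σ ∧ descB σ = k}

/-- Primary type D Eulerian number. -/
noncomputable def eulerianD (n k : ℕ) : ℕ :=
  Fintype.card {σ : Equiv.Perm (BSet n) //
    (IsSigned σ ∧ Even (negCount σ)) ∧ descB σ = k}

/-- Complementary type D Eulerian number. -/
noncomputable def eulerianDt (n k : ℕ) : ℕ :=
  Fintype.card {σ : Equiv.Perm (BSet n) //
    (IsSigned σ ∧ ¬ Even (negCount σ)) ∧ descB σ = k}

noncomputable def polyB (n : ℕ) (t : ℝ) : ℝ :=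
  ∑ k ∈ Finset.range (n + 1), (eulerianB n k : ℝ) * t ^ k

noncomputable def polyD (n : ℕ) (t : ℝ) : ℝ :=
  ∑ k ∈ Finset.range (n + 1), (eulerianD n k : ℝ) * t ^ k

noncomputable def polyDt (n : ℕ) (t : ℝ) : ℝ :=
  ∑ k ∈ Finset.range (n + 1), (eulerianDt n k : ℝ) * t ^ k

namespace SPaux

lemma descCount_cons2 (h a : ℤ) (l : List ℤ) :
    descCount (h :: a :: l) = (if a < h then 1 else 0) + descCount (a :: l) := rfl

lemma descCount_le (h : ℤ) (l : List ℤ) : descCount (h :: l) ≤ l.length := by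
  induction l generalizing h with
  | nil => simp [descCount]
  | cons a l ih =>
    rw [descCount_cons2]
    have := ih a
    simp only [List.length_cons]
    split <;> omega

/-- Inserting a maximal positive element: sum over all insertion positions. -/
lemma sum_ins_max (g : ℕ → ℕ) (l : List ℤ) (h v : ℤ) (hv : h < v)
    (hl : ∀ x ∈ l, x < v) :
    ∑ p ∈ range (l.length + 1), g (descCount (h :: l.insertIdx p v)) =
      (descCount (h :: l) + 1) * g (descCount (h :: l)) +
        (l.length - descCount (h :: l)) * g (descCount (h :: l) + 1) := by
  induction l generalizing h g with
  | nil => simp [descCount, not_lt.2 hv.le]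
  | cons a l ih =>
    have hav : a < v := hl a (by simp)
    have hlv : ∀ x ∈ l, x < v := fun x hx => hl x (by simp [hx])
    have hD := descCount_le a l
    rw [Finset.sum_range_succ']
    have e1 : ∀ p, (a :: l).insertIdx (p + 1) v = a :: l.insertIdx p v := fun p =>
      List.insertIdx_succ_cons ..
    have e2 : ∀ p, descCount (h :: a :: l.insertIdx p v) =
        (if a < h then 1 else 0) + descCount (a :: l.insertIdx p v) := fun p => rfl
    simp only [e1, e2, List.length_cons]
    rw [ih (fun j => g ((if a < h then 1 else 0) + j)) a hav hlv]
    have e3 : (a :: l).insertIdx 0 v = v :: a :: l := rfl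
    rw [e3, descCount_cons2, descCount_cons2, descCount_cons2]
    simp only [if_neg (not_lt.2 hv.le), if_pos hav, List.length_cons]
    set c : ℕ := if a < h then 1 else 0 with hc
    have hc01 : c = 0 ∨ c = 1 := by rw [hc]; split <;> simp
    set D := descCount (a :: l) with hDdef
    rcases hc01 with h0 | h1
    · rw [h0]
      simp only [Nat.zero_add, zero_add]
      have : l.length + 1 - D = (l.length - D) + 1 := by omega
      rw [this]
      ring
    · rw [h1]
      simp only [zero_add]
      have : l.length + 1 - (1 + D) = l.length - D := by omega
      rw [this]
      ring

/-- Inserting a minimal negative element: sum over all insertion positions. -/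
lemma sum_ins_min (g : ℕ → ℕ) (l : List ℤ) (h v : ℤ) (hv : v < h)
    (hl : ∀ x ∈ l, v < x) :
    ∑ p ∈ range (l.length + 1), g (descCount (h :: l.insertIdx p v)) =
      descCount (h :: l) * g (descCount (h :: l)) +
        (l.length + 1 - descCount (h :: l)) * g (descCount (h :: l) + 1) := by
  induction l generalizing h g with
  | nil => simp [descCount, hv]
  | cons a l ih =>
    have hav : v < a := hl a (by simp)
    have hlv : ∀ x ∈ l, v < x := fun x hx => hl x (by simp [hx])
    have hD := descCount_le a l
    rw [Finset.sum_range_succ']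
    have e1 : ∀ p, (a :: l).insertIdx (p + 1) v = a :: l.insertIdx p v := fun p =>
      List.insertIdx_succ_cons ..
    have e2 : ∀ p, descCount (h :: a :: l.insertIdx p v) =
        (if a < h then 1 else 0) + descCount (a :: l.insertIdx p v) := fun p => rfl
    simp only [e1, e2, List.length_cons]
    rw [ih (fun j => g ((if a < h then 1 else 0) + j)) a hav hlv]
    have e3 : (a :: l).insertIdx 0 v = v :: a :: l := rfl
    rw [e3, descCount_cons2, descCount_cons2, descCount_cons2]
    simp only [if_pos hv, if_neg (not_lt.2 hav.le), List.length_cons]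
    set c : ℕ := if a < h then 1 else 0 with hc
    have hc01 : c = 0 ∨ c = 1 := by rw [hc]; split <;> simp
    set D := descCount (a :: l) with hDdef
    rcases hc01 with h0 | h1
    · rw [h0]
      simp only [Nat.zero_add, zero_add]
      have : l.length + 1 + 1 - D = (l.length + 1 - D) + 1 := by omega
      rw [this]
      ring
    · rw [h1]
      simp only [zero_add]
      have : l.length + 1 + 1 - (1 + D) = l.length + 1 - D := by omega
      have h2 : 1 + D + 1 = 1 + (D+1) := by omega
      rw [this, h2]
      ring
end SPaux


lemma map_insertIdx' {α β : Type*} (f : α → β) (a : α) :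
    ∀ (p : ℕ) (l : List α), (l.insertIdx p a).map f = (l.map f).insertIdx p (f a)
  | 0, l => rfl
  | (p+1), [] => rfl
  | (p+1), (b :: l) => by
      rw [List.insertIdx_succ_cons, List.map_cons, map_insertIdx' f a p l,
        List.map_cons, List.insertIdx_succ_cons]

/-- descents of (0, l). -/
def d (l : List ℤ) : ℕ := descCount ((0:ℤ) :: l)

def ins (n : ℕ) (x : List ℤ × ℕ × Bool) : List ℤ :=
  x.1.insertIdx x.2.1 (if x.2.2 then ((n:ℤ)+1) else -((n:ℤ)+1))

/-- The finset of signed words of length n. -/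
def SW : ℕ → Finset (List ℤ)
  | 0 => {([] : List ℤ)}
  | (n+1) => ((SW n) ×ˢ (Finset.range (n+1) ×ˢ (Finset.univ : Finset Bool))).image (ins n)

lemma mem_SW_absPerm {n : ℕ} {l : List ℤ} (hl : l ∈ SW n) :
    (l.map Int.natAbs).Perm (List.range' 1 n) := by
  induction n generalizing l with
  | zero => simp [SW] at hl; simp [hl]
  | succ n ih =>
    simp only [SW, Finset.mem_image] at hl
    obtain ⟨⟨l₀, p, s⟩, hmem, rfl⟩ := hl
    simp only [Finset.mem_product, Finset.mem_range] at hmem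
    obtain ⟨h0, hp, -⟩ := hmem
    have hlen : l₀.length = n := by simpa using (ih h0).length_eq
    have hple : p ≤ (l₀.map Int.natAbs).length := by simp [hlen]; omega
    have h1 : (ins n (l₀, p, s)).map Int.natAbs
        = (l₀.map Int.natAbs).insertIdx p (n+1) := by
      unfold ins
      rw [map_insertIdx']
      congr 1
      rcases s with _ | _ <;> simp <;> omega
    rw [h1]
    refine (List.perm_insertIdx _ _ hple).trans ?_
    rw [List.range'_concat]
    refine ((ih h0).cons _).trans ?_
    have : 1 + 1 * n = n + 1 := by omega
    rw [this]
    exact (List.perm_append_singleton _ _).symm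

lemma mem_SW_length {n : ℕ} {l : List ℤ} (hl : l ∈ SW n) : l.length = n := by
  simpa using (mem_SW_absPerm hl).length_eq

lemma mem_SW_entry {n : ℕ} {l : List ℤ} (hl : l ∈ SW n) {x : ℤ} (hx : x ∈ l) :
    x ≠ 0 ∧ x.natAbs ≤ n := by
  have : x.natAbs ∈ List.range' 1 n := (mem_SW_absPerm hl).mem_iff.mp
    (List.mem_map_of_mem hx)
  rw [List.mem_range'_1] at this
  omega

lemma mem_SW_nodup {n : ℕ} {l : List ℤ} (hl : l ∈ SW n) :
    (l.map Int.natAbs).Nodup :=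
  (mem_SW_absPerm hl).nodup_iff.mpr List.nodup_range'

lemma d_le {n : ℕ} {l : List ℤ} (hl : l ∈ SW n) : d l ≤ n := by
  rw [d]
  have := SPaux.descCount_le (0:ℤ) l
  rw [mem_SW_length hl] at this
  exact this

lemma ins_injOn {n : ℕ} {x y : List ℤ × ℕ × Bool}
    (hx : x ∈ (SW n) ×ˢ (Finset.range (n+1) ×ˢ (Finset.univ : Finset Bool)))
    (hy : y ∈ (SW n) ×ˢ (Finset.range (n+1) ×ˢ (Finset.univ : Finset Bool)))
    (hxy : ins n x = ins n y) : x = y := by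
  obtain ⟨l₁, p₁, s₁⟩ := x
  obtain ⟨l₂, p₂, s₂⟩ := y
  simp only [Finset.mem_product, Finset.mem_range] at hx hy
  obtain ⟨hl₁, hp₁, -⟩ := hx
  obtain ⟨hl₂, hp₂, -⟩ := hy
  have hlen₁ : l₁.length = n := mem_SW_length hl₁
  have hlen₂ : l₂.length = n := mem_SW_length hl₂
  set v₁ : ℤ := if s₁ then ((n:ℤ)+1) else -((n:ℤ)+1) with hv₁
  set v₂ : ℤ := if s₂ then ((n:ℤ)+1) else -((n:ℤ)+1) with hv₂
  have hv₁abs : v₁.natAbs = n + 1 := by rw [hv₁]; rcases s₁ with _|_ <;> simp <;> omega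
  have hv₂abs : v₂.natAbs = n + 1 := by rw [hv₂]; rcases s₂ with _|_ <;> simp <;> omega
  have key : ∀ (l₁ l₂ : List ℤ) (p₁ p₂ : ℕ) (v₁ v₂ : ℤ), l₁ ∈ SW n → l₂ ∈ SW n →
      p₁ ≤ l₁.length → p₂ ≤ l₂.length → v₁.natAbs = n+1 → v₂.natAbs = n+1 →
      l₁.insertIdx p₁ v₁ = l₂.insertIdx p₂ v₂ → ¬ (p₁ < p₂) := by
    intro l₁ l₂ p₁ p₂ v₁ v₂ hl₁ hl₂ hq₁ hq₂ ha₁ ha₂ heq hlt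
    have h1 : (l₁.insertIdx p₁ v₁)[p₁]'(by
        rw [List.length_insertIdx_of_le_length hq₁]; omega) = v₁ :=
      List.getElem_insertIdx_self _
    have hp₁l₂ : p₁ < l₂.length := by omega
    have h2 : (l₂.insertIdx p₂ v₂)[p₁]'(by
        rw [List.length_insertIdx_of_le_length hq₂]; omega) = l₂[p₁] :=
      List.getElem_insertIdx_of_lt hlt _
    have : v₁ = l₂[p₁] := by
      refine h1.symm.trans (Eq.trans ?_ h2)
      exact List.getElem_of_eq heq _
    have hmem : l₂[p₁] ∈ l₂ := List.getElem_mem _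
    have := (mem_SW_entry hl₂ hmem).2
    omega
  have hpp : p₁ = p₂ := by
    rcases lt_trichotomy p₁ p₂ with h | h | h
    · exact absurd h (key l₁ l₂ p₁ p₂ v₁ v₂ hl₁ hl₂ (by omega) (by omega) hv₁abs hv₂abs hxy)
    · exact h
    · exact absurd h (key l₂ l₁ p₂ p₁ v₂ v₁ hl₂ hl₁ (by omega) (by omega) hv₂abs hv₁abs hxy.symm)
  subst hpp
  have hvv : v₁ = v₂ := by
    have h1 : (l₁.insertIdx p₁ v₁)[p₁]'(by
        rw [List.length_insertIdx_of_le_length (by omega)]; omega) = v₁ :=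
      List.getElem_insertIdx_self _
    have h2 : (l₂.insertIdx p₁ v₂)[p₁]'(by
        rw [List.length_insertIdx_of_le_length (by omega)]; omega) = v₂ :=
      List.getElem_insertIdx_self _
    refine h1.symm.trans (Eq.trans ?_ h2)
    exact List.getElem_of_eq hxy _
  have hss : s₁ = s₂ := by
    rw [hv₁, hv₂] at hvv
    rcases s₁ with _|_ <;> rcases s₂ with _|_ <;> simp at hvv ⊢ <;> omega
  have hll : l₁ = l₂ := by
    have := congrArg (fun l => l.eraseIdx p₁) hxy
    simpa only [ins, ← hv₁, ← hv₂, List.eraseIdx_insertIdx_self] using this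
  simp [hll, hss]

lemma sum_SW_succ (n : ℕ) (g : ℕ → ℕ) :
    ∑ l ∈ SW (n+1), g (d l) =
      ∑ l ∈ SW n, ((2 * d l + 1) * g (d l) + (2*n + 1 - 2 * d l) * g (d l + 1)) := by
  rw [show SW (n+1) = ((SW n) ×ˢ (Finset.range (n+1) ×ˢ (Finset.univ : Finset Bool))).image (ins n) from rfl]
  rw [Finset.sum_image (fun x hx y hy h => ins_injOn hx hy h)]
  rw [Finset.sum_product]
  refine Finset.sum_congr rfl (fun l hl => ?_)
  rw [Finset.sum_product]
  have hlen : l.length = n := mem_SW_length hl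
  have hD : d l ≤ n := d_le hl
  have hbool : ∀ p : ℕ, ∑ s ∈ (Finset.univ : Finset Bool), g (d (ins n (l, p, s)))
      = g (d (l.insertIdx p ((n:ℤ)+1))) + g (d (l.insertIdx p (-((n:ℤ)+1)))) := by
    intro p
    rw [Fintype.sum_bool]
    rfl
  simp only [hbool]
  rw [Finset.sum_add_distrib]
  have hmax : ∑ p ∈ Finset.range (n+1), g (d (l.insertIdx p ((n:ℤ)+1)))
      = (d l + 1) * g (d l) + (n - d l) * g (d l + 1) := by
    have := SPaux.sum_ins_max g l 0 ((n:ℤ)+1) (by positivity)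
      (fun x hx => by have := (mem_SW_entry hl hx).2; omega)
    rw [hlen] at this
    simp only [d]
    exact this
  have hmin : ∑ p ∈ Finset.range (n+1), g (d (l.insertIdx p (-((n:ℤ)+1))))
      = d l * g (d l) + (n + 1 - d l) * g (d l + 1) := by
    have := SPaux.sum_ins_min g l 0 (-((n:ℤ)+1)) (by omega)
      (fun x hx => by have := (mem_SW_entry hl hx).1; have h2 := (mem_SW_entry hl hx).2; omega)
    rw [hlen] at this
    simp only [d]
    exact this
  rw [hmax, hmin]
  have e1 : 2 * d l + 1 = (d l + 1) + d l := by omega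
  have e2 : 2*n + 1 - 2 * d l = (n - d l) + (n + 1 - d l) := by omega
  rw [e1, e2, add_mul, add_mul]
  ring

lemma key_choose (n k D : ℕ) (hD : D ≤ n) :
    (2*D+1) * (k+n+1-D).choose (n+1) + (2*n+1-2*D) * (k+n-D).choose (n+1)
      = (2*k+1) * (k+n-D).choose n := by
  rcases le_or_gt D k with h | h
  · obtain ⟨m, rfl⟩ : ∃ m, k = D + m := ⟨k - D, by omega⟩
    have e1 : D + m + n + 1 - D = m + n + 1 := by omega
    have e2 : D + m + n - D = m + n := by omega
    rw [e1, e2]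
    have h1 : (m+n+1) * (m+n).choose n = (m+n+1).choose (n+1) * (n+1) := by
      have := Nat.add_one_mul_choose_eq (m+n) n
      simpa [Nat.succ_eq_add_one] using this
    have h2 : (m+n).choose (n+1) * (n+1) = (m+n).choose n * m := by
      have := Nat.choose_succ_right_eq (m+n) n
      simpa using this
    have hpos : 0 < n + 1 := Nat.succ_pos n
    apply Nat.eq_of_mul_eq_mul_left hpos
    zify
    have hsub : ((2*n+1-2*D : ℕ) : ℤ) = 2*(n:ℤ)+1-2*D := by
      have : 2*D ≤ 2*n+1 := by omega
      omega
    rw [hsub]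
    zify at h1 h2
    nlinarith [h1, h2]
  · have c1 : (k+n+1-D) < n+1 := by omega
    have c2 : (k+n-D) < n+1 := by omega
    have c3 : (k+n-D) < n := by omega
    rw [Nat.choose_eq_zero_of_lt c1, Nat.choose_eq_zero_of_lt c2, Nat.choose_eq_zero_of_lt c3]
    simp

theorem worpitzkyB (n k : ℕ) :
    ∑ l ∈ SW n, (k + n - d l).choose n = (2*k+1)^n := by
  induction n with
  | zero => simp [SW, d, descCount]
  | succ n ih =>
    rw [sum_SW_succ n (fun j => (k + (n+1) - j).choose (n+1))]
    have step : ∀ l ∈ SW n,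
        (2 * d l + 1) * (k + (n+1) - d l).choose (n+1)
          + (2*n + 1 - 2 * d l) * (k + (n+1) - (d l + 1)).choose (n+1)
        = (2*k+1) * ((k + n - d l).choose n) := by
      intro l hl
      have hD := d_le hl
      have e1 : k + (n+1) - d l = k + n + 1 - d l := by omega
      have e2 : k + (n+1) - (d l + 1) = k + n - d l := by omega
      rw [e1, e2]
      exact key_choose n k (d l) hD
    rw [Finset.sum_congr rfl step, ← Finset.mul_sum, ih]
    ring

lemma map_eraseIdx' {α β : Type*} (f : α → β) :
    ∀ (p : ℕ) (l : List α), (l.eraseIdx p).map f = (l.map f).eraseIdx p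
  | _, [] => by simp
  | 0, (a :: l) => by simp
  | (p+1), (a :: l) => by
      simp only [List.eraseIdx_cons_succ, List.map_cons, map_eraseIdx' f p l]

lemma insertIdx_eraseIdx_getElem {α : Type*} :
    ∀ (l : List α) (p : ℕ) (hp : p < l.length), (l.eraseIdx p).insertIdx p l[p] = l
  | (a :: l), 0, _ => rfl
  | (a :: l), (p+1), hp => by
      simp only [List.eraseIdx_cons_succ, List.insertIdx_succ_cons, List.getElem_cons_succ]
      rw [insertIdx_eraseIdx_getElem l p (by simpa using hp)]

lemma mem_SW_of_absPerm {n : ℕ} {l : List ℤ} (h : (l.map Int.natAbs).Perm (List.range' 1 n)) :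
    l ∈ SW n := by
  induction n generalizing l with
  | zero =>
    have : l.map Int.natAbs = [] := List.perm_nil.mp (by simpa using h)
    have : l = [] := by simpa using congrArg List.length this
    simp [SW, this]
  | succ n ih =>
    set M := l.map Int.natAbs with hM
    have hlenM : M.length = l.length := by simp [hM]
    have hlen : l.length = n + 1 := by
      have := h.length_eq
      simp [hM] at this
      simpa using this
    have hmem : (n+1) ∈ M := h.mem_iff.mpr (by rw [List.mem_range'_1]; omega)
    set p := M.idxOf (n+1) with hpdef
    have hp : p < M.length := List.idxOf_lt_length_iff.mpr hmem
    have hplen : p < l.length := by omega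
    have hMp : M[p] = n + 1 := List.getElem_idxOf hp
    have hlp : (l[p]).natAbs = n + 1 := by
      have : M[p]'hp = (l[p]'hplen).natAbs := by simp [hM]
      omega
    have hperm0 : ((l.eraseIdx p).map Int.natAbs).Perm (List.range' 1 n) := by
      rw [map_eraseIdx']
      refine ((List.erase_getElem hp).symm.trans ?_)
      rw [hMp]
      refine (h.erase (n+1)).trans ?_
      have hconc : List.range' 1 (n+1) = List.range' 1 n ++ [n+1] := by
        have := List.range'_concat (step := 1) (s := 1) (n := n)
        simp only [one_mul] at this
        rw [this, Nat.add_comm 1 n]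
      rw [hconc]
      refine (((List.perm_append_singleton _ _).erase _).trans ?_)
      rw [List.erase_cons_head]
    have h0 : l.eraseIdx p ∈ SW n := ih hperm0
    have hcases : l[p]'hplen = ((n:ℤ)+1) ∨ l[p]'hplen = -((n:ℤ)+1) := by
      rcases Int.natAbs_eq (l[p]'hplen) with h' | h'
      · left; rw [h', hlp]; push_cast; ring
      · right; rw [h', hlp]; push_cast; ring
    rw [show SW (n+1) = ((SW n) ×ˢ (Finset.range (n+1) ×ˢ (Finset.univ : Finset Bool))).image (ins n) from rfl]
    rw [Finset.mem_image]
    refine ⟨(l.eraseIdx p, p, decide (0 < l[p])), ?_, ?_⟩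
    · simp only [Finset.mem_product, Finset.mem_range]
      exact ⟨h0, by omega, Finset.mem_univ _⟩
    · unfold ins
      simp only
      have hv : (if (decide (0 < l[p]'hplen)) then ((n:ℤ)+1) else -((n:ℤ)+1)) = l[p] := by
        rcases hcases with hc | hc <;> rw [hc] <;> simp <;> omega
      rw [hv]
      exact insertIdx_eraseIdx_getElem l p hplen

-- bridge
section Bridge
variable {n : ℕ}

def zeroB : BSet n := ⟨0, by simp only [Finset.mem_Icc]; omega⟩

lemma mem_bset (x : BSet n) : -(n:ℤ) ≤ x.1 ∧ x.1 ≤ n := by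
  have := x.2; simp only [Finset.mem_Icc] at this; exact this

lemma sigB_zero {σ : Equiv.Perm (BSet n)} (hσ : IsSigned σ) : σ zeroB = zeroB := by
  have h := hσ zeroB
  have hz : negB (zeroB : BSet n) = zeroB := Subtype.ext (by simp [negB, zeroB])
  rw [hz] at h
  refine Subtype.ext ?_
  rw [show ((zeroB : BSet n)).1 = 0 from rfl]
  omega

lemma sigB_neg {σ : Equiv.Perm (BSet n)} (hσ : IsSigned σ) (x : BSet n) :
    σ (negB x) = negB (σ x) := Subtype.ext (hσ x)

def wordB (σ : Equiv.Perm (BSet n)) : List ℤ := List.ofFn fun i : Fin n => (σ (posB i)).1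

lemma wordB_ne_zero {σ : Equiv.Perm (BSet n)} (hσ : IsSigned σ) (i : Fin n) :
    (σ (posB i)).1 ≠ 0 := by
  intro h
  have : σ (posB i) = zeroB := Subtype.ext h
  rw [← sigB_zero hσ] at this
  have := σ.injective this
  have : ((i:ℕ):ℤ) + 1 = 0 := congrArg Subtype.val this
  omega

lemma wordB_abs_inj {σ : Equiv.Perm (BSet n)} (hσ : IsSigned σ) {i j : Fin n}
    (h : (σ (posB i)).1.natAbs = (σ (posB j)).1.natAbs) : i = j := by
  rcases Int.natAbs_eq_natAbs_iff.mp h with h' | h'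
  · have := σ.injective (Subtype.ext h')
    have : ((i:ℕ):ℤ) + 1 = ((j:ℕ):ℤ) + 1 := congrArg Subtype.val this
    exact Fin.ext (by omega)
  · have h2 : σ (posB i) = negB (σ (posB j)) := Subtype.ext h'
    rw [← sigB_neg hσ] at h2
    have := σ.injective h2
    have : ((i:ℕ):ℤ) + 1 = -(((j:ℕ):ℤ) + 1) := congrArg Subtype.val this
    omega

lemma wordB_mem_SW {σ : Equiv.Perm (BSet n)} (hσ : IsSigned σ) : wordB σ ∈ SW n := by
  apply mem_SW_of_absPerm
  have hnodup : ((wordB σ).map Int.natAbs).Nodup := by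
    rw [wordB, List.map_ofFn, List.nodup_ofFn]
    intro i j hij
    exact wordB_abs_inj hσ hij
  have hsub : ((wordB σ).map Int.natAbs) ⊆ List.range' 1 n := by
    intro x hx
    rw [List.mem_map] at hx
    obtain ⟨y, hy, rfl⟩ := hx
    rw [wordB, List.mem_ofFn] at hy
    obtain ⟨i, hy⟩ := hy
    have hy' : (σ (posB i)).1 = y := hy
    rw [List.mem_range'_1, ← hy']
    have h1 := wordB_ne_zero hσ i
    have h2 := mem_bset (σ (posB i))
    omega
  refine List.Subperm.perm_of_length_le (List.subperm_of_subset hnodup hsub) ?_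
  simp [wordB]

lemma getD_eq' {l : List ℤ} {i : ℕ} (h : i < l.length) : l.getD i 0 = l[i] := by
  simp [List.getD_eq_getElem?_getD, List.getElem?_eq_getElem h]

lemma eulerianB_eq (n k : ℕ) :
    eulerianB n k = ((SW n).filter (fun l => d l = k)).card := by
  rw [eulerianB, Fintype.card_subtype]
  apply Finset.card_bij (fun σ _ => wordB σ)
  · intro σ hσ
    rw [Finset.mem_filter] at *
    obtain ⟨-, h1, h2⟩ := hσ
    exact ⟨wordB_mem_SW h1, h2⟩
  · intro σ hσ τ hτ h
    rw [Finset.mem_filter] at hσ hτ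
    obtain ⟨-, hσ, -⟩ := hσ
    obtain ⟨-, hτ, -⟩ := hτ
    have hfun : ∀ i : Fin n, (σ (posB i)).1 = (τ (posB i)).1 := by
      intro i
      have := List.ofFn_inj.mp h
      exact congrFun this i
    have hpos : ∀ i : Fin n, σ (posB i) = τ (posB i) := fun i => Subtype.ext (hfun i)
    ext x
    · rcases lt_trichotomy x.1 0 with hx | hx | hx
      · have hb := mem_bset x
        set i : Fin n := ⟨(-x.1 - 1).toNat, by omega⟩ with hi
        have hpx : negB (posB i) = x := by
          apply Subtype.ext
          simp only [negB, posB, hi]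
          omega
        rw [← hpx, sigB_neg hσ, sigB_neg hτ, hpos i]
      · have hx0 : x = zeroB := Subtype.ext hx
        rw [hx0, sigB_zero hσ, sigB_zero hτ]
      · have hb := mem_bset x
        set i : Fin n := ⟨(x.1 - 1).toNat, by omega⟩ with hi
        have hpx : posB i = x := by
          apply Subtype.ext
          simp only [posB, hi]
          omega
        rw [← hpx, hpos i]
  · -- surjective
    intro l hl
    rw [Finset.mem_filter] at hl
    obtain ⟨hl, hdl⟩ := hl
    have hlen : l.length = n := mem_SW_length hl
    set F : BSet n → ℤ := fun x =>
      if 0 < x.1 then l.getD (x.1.toNat - 1) 0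
      else if x.1 < 0 then -(l.getD ((-x.1).toNat - 1) 0) else 0 with hF
    have hent : ∀ (i : ℕ), i < l.length → l.getD i 0 ≠ 0 ∧ (l.getD i 0).natAbs ≤ n := by
      intro i h
      rw [getD_eq' h]
      exact mem_SW_entry hl (List.getElem_mem h)
    have habsinj : ∀ (i j : ℕ), i < l.length → j < l.length →
        (l.getD i 0).natAbs = (l.getD j 0).natAbs → i = j := by
      intro i j hi hj hij
      rw [getD_eq' hi, getD_eq' hj] at hij
      have hnd := mem_SW_nodup hl
      have h1 : (l.map Int.natAbs)[i]'(by simpa using hi) =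
          (l.map Int.natAbs)[j]'(by simpa using hj) := by
        simpa using hij
      exact (List.Nodup.getElem_inj_iff hnd).mp h1
    have hFpos : ∀ (x : BSet n), 0 < x.1 → F x = l.getD (x.1.toNat - 1) 0 := by
      intro x hx; rw [hF]; simp only [if_pos hx]
    have hFneg : ∀ (x : BSet n), x.1 < 0 → F x = -(l.getD ((-x.1).toNat - 1) 0) := by
      intro x hx; rw [hF]; simp only [if_neg (by omega : ¬ 0 < x.1), if_pos hx]
    have hFzero : ∀ (x : BSet n), x.1 = 0 → F x = 0 := by
      intro x hx
      rw [hF]; simp only [if_neg (by omega : ¬ 0 < x.1), if_neg (by omega : ¬ x.1 < 0)]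
    have hidxp : ∀ (x : BSet n), 0 < x.1 → x.1.toNat - 1 < l.length := by
      intro x hx; have := mem_bset x; omega
    have hidxn : ∀ (x : BSet n), x.1 < 0 → (-x.1).toNat - 1 < l.length := by
      intro x hx; have := mem_bset x; omega
    have hmemF : ∀ x : BSet n, F x ∈ Finset.Icc (-(n:ℤ)) (n:ℤ) := by
      intro x
      rw [Finset.mem_Icc]
      have hb := mem_bset x
      rcases lt_trichotomy x.1 0 with hx | hx | hx
      · rw [hFneg x hx]
        have := (hent ((-x.1).toNat - 1) (hidxn x hx)).2
        omega
      · rw [hFzero x hx]; omega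
      · rw [hFpos x hx]
        have := (hent (x.1.toNat - 1) (hidxp x hx)).2
        omega
    set f : BSet n → BSet n := fun x => ⟨F x, hmemF x⟩ with hf
    have hinj : Function.Injective f := by
      intro x y hxy
      have hxy : F x = F y := congrArg Subtype.val hxy
      have hbx := mem_bset x
      have hby := mem_bset y
      apply Subtype.ext
      rcases lt_trichotomy x.1 0 with hx | hx | hx <;>
        rcases lt_trichotomy y.1 0 with hy | hy | hy
      · rw [hFneg x hx, hFneg y hy] at hxy
        have := habsinj ((-x.1).toNat - 1) ((-y.1).toNat - 1) (hidxn x hx) (hidxn y hy)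
          (by omega)
        omega
      · rw [hFneg x hx, hFzero y hy] at hxy
        have := (hent ((-x.1).toNat - 1) (hidxn x hx)).1
        omega
      · rw [hFneg x hx, hFpos y hy] at hxy
        have h1 := (hent ((-x.1).toNat - 1) (hidxn x hx)).1
        have h2 := (hent (y.1.toNat - 1) (hidxp y hy)).1
        have heq := habsinj ((-x.1).toNat - 1) (y.1.toNat - 1) (hidxn x hx) (hidxp y hy)
          (by rw [← hxy, Int.natAbs_neg])
        have hAB : l.getD ((-x.1).toNat - 1) 0 = l.getD (y.1.toNat - 1) 0 := by rw [heq]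
        omega
      · rw [hFzero x hx, hFneg y hy] at hxy
        have := (hent ((-y.1).toNat - 1) (hidxn y hy)).1
        omega
      · omega
      · rw [hFzero x hx, hFpos y hy] at hxy
        have := (hent (y.1.toNat - 1) (hidxp y hy)).1
        omega
      · rw [hFpos x hx, hFneg y hy] at hxy
        have h1 := (hent (x.1.toNat - 1) (hidxp x hx)).1
        have h2 := (hent ((-y.1).toNat - 1) (hidxn y hy)).1
        have heq := habsinj (x.1.toNat - 1) ((-y.1).toNat - 1) (hidxp x hx) (hidxn y hy)
          (by rw [hxy, Int.natAbs_neg])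
        have hAB : l.getD (x.1.toNat - 1) 0 = l.getD ((-y.1).toNat - 1) 0 := by rw [heq]
        omega
      · rw [hFpos x hx, hFzero y hy] at hxy
        have := (hent (x.1.toNat - 1) (hidxp x hx)).1
        omega
      · rw [hFpos x hx, hFpos y hy] at hxy
        have := habsinj (x.1.toNat - 1) (y.1.toNat - 1) (hidxp x hx) (hidxp y hy)
          (by omega)
        omega
    have hbij : Function.Bijective f := Finite.injective_iff_bijective.mp hinj
    set σ : Equiv.Perm (BSet n) := Equiv.ofBijective f hbij with hσdef
    have hσapp : ∀ x, (σ x).1 = F x := fun x => rfl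
    have hnegval : ∀ x : BSet n, (negB x).1 = -x.1 := fun x => rfl
    have hsigned : IsSigned σ := by
      intro x
      rw [hσapp, hσapp]
      have hb := mem_bset x
      rcases lt_trichotomy x.1 0 with hx | hx | hx
      · rw [hFneg x hx]
        rw [hFpos (negB x) (by rw [hnegval]; omega)]
        rw [hnegval]
        omega
      · rw [hFzero x hx]
        rw [hFzero (negB x) (by rw [hnegval]; omega)]
        omega
      · rw [hFpos x hx]
        rw [hFneg (negB x) (by rw [hnegval]; omega)]
        rw [hnegval]
        have : (- -x.1).toNat - 1 = x.1.toNat - 1 := by omega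
        rw [this]
    have hword : wordB σ = l := by
      apply List.ext_getElem (by simp [wordB, hlen])
      intro i h1 h2
      simp only [wordB, List.getElem_ofFn]
      rw [hσapp]
      have hval : (posB (⟨i, by simpa [wordB] using h1⟩ : Fin n)).1 = (i:ℤ) + 1 := rfl
      rw [hFpos _ (by rw [hval]; omega)]
      rw [hval]
      have : ((i:ℤ) + 1).toNat - 1 = i := by omega
      rw [this]
      exact getD_eq' h2
    refine ⟨σ, ?_, hword⟩
    rw [Finset.mem_filter]
    refine ⟨Finset.mem_univ _, hsigned, ?_⟩
    show d (wordB σ) = k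
    rw [hword]
    exact hdl

lemma polyB_eq (n : ℕ) (t : ℝ) : polyB n t = ∑ l ∈ SW n, t ^ d l := by
  rw [polyB]
  rw [← Finset.sum_fiberwise_of_maps_to (g := fun l => d l) (t := Finset.range (n+1))
    (fun l hl => by simpa using Nat.lt_succ_of_le (d_le hl)) (fun l => t ^ d l)]
  refine Finset.sum_congr rfl (fun j hj => ?_)
  rw [eulerianB_eq]
  have hc : ∑ l ∈ (SW n).filter (fun l => d l = j), t ^ d l
      = ∑ l ∈ (SW n).filter (fun l => d l = j), t ^ j :=
    Finset.sum_congr rfl (fun l hl => by rw [(Finset.mem_filter.mp hl).2])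
  rw [hc, Finset.sum_const, nsmul_eq_mul]
end Bridge


section Analytic
variable {t : ℝ}

lemma hasSum_shift (n j : ℕ) (hj : j ≤ n) (ht0 : 0 ≤ t) (ht1 : t < 1) :
    HasSum (fun k : ℕ => (((k + n - j).choose n : ℕ) : ℝ) * t ^ k)
      (t ^ j / (1 - t) ^ (n + 1)) := by
  have hnorm : ‖t‖ < 1 := by rw [Real.norm_eq_abs, abs_of_nonneg ht0]; exact ht1
  have H := hasSum_choose_mul_geometric_of_norm_lt_one n hnorm
  have H2 := H.mul_left (t ^ j)
  have hinj : Function.Injective (fun m : ℕ => m + j) := add_left_injective j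
  have hvan : ∀ k ∉ Set.range (fun m : ℕ => m + j),
      (((k + n - j).choose n : ℕ) : ℝ) * t ^ k = 0 := by
    intro k hk
    have hkj : k < j := by
      by_contra h
      exact hk ⟨k - j, show k - j + j = k by omega⟩
    rw [Nat.choose_eq_zero_of_lt (by omega : k + n - j < n)]
    simp
  rw [← Function.Injective.hasSum_iff hinj hvan]
  have e2 : t ^ j * (1 / (1 - t) ^ (n + 1)) = t ^ j / (1 - t) ^ (n + 1) := by ring
  have e3 : ((fun k : ℕ => (((k + n - j).choose n : ℕ) : ℝ) * t ^ k) ∘ (fun m : ℕ => m + j))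
      = fun m : ℕ => t ^ j * (((m + n).choose n : ℝ) * t ^ m) := by
    funext m
    simp only [Function.comp]
    rw [show m + j + n - j = m + n by omega]
    ring
  rw [e3, ← e2]
  exact H2

lemma hasSum_main (n : ℕ) (ht0 : 0 ≤ t) (ht1 : t < 1) :
    HasSum (fun k : ℕ => (2 * (k : ℝ) + 1) ^ n * t ^ k)
      (polyB n t / (1 - t) ^ (n + 1)) := by
  have key : (fun k : ℕ => (2 * (k : ℝ) + 1) ^ n * t ^ k)
      = fun k : ℕ => ∑ l ∈ SW n, (((k + n - d l).choose n : ℕ) : ℝ) * t ^ k := by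
    funext k
    rw [← Finset.sum_mul, ← Nat.cast_sum, worpitzkyB n k]
    push_cast
    ring
  rw [key, polyB_eq]
  have H : HasSum (fun k : ℕ => ∑ l ∈ SW n, (((k + n - d l).choose n : ℕ) : ℝ) * t ^ k)
      (∑ l ∈ SW n, t ^ (d l) / (1 - t) ^ (n + 1)) :=
    hasSum_sum (fun l hl => hasSum_shift n (d l) (d_le hl) ht0 ht1)
  rwa [← Finset.sum_div] at H

lemma hasSum_final (n : ℕ) (ht0 : 0 < t) (ht1 : t < 1) :
    HasSum (fun k : ℕ => (1 - t) ^ (n + 1) * (2 * (k : ℝ) + 1) ^ n * t ^ k) (polyB n t) := by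
  have h1t : (0:ℝ) < 1 - t := by linarith
  have h := (hasSum_main n ht0.le ht1).mul_left ((1 - t) ^ (n + 1))
  have e : (1 - t) ^ (n + 1) * (polyB n t / (1 - t) ^ (n + 1)) = polyB n t := by
    field_simp
  rw [e] at h
  have e2 : (fun k : ℕ => (1 - t) ^ (n + 1) * (2 * (k : ℝ) + 1) ^ n * t ^ k)
      = fun k : ℕ => (1 - t) ^ (n + 1) * ((2 * (k : ℝ) + 1) ^ n * t ^ k) :=
    funext fun k => by ring
  rw [e2]
  exact h


/-- μ^B_t = Σ_{k=0}^∞ (1−t) t^k δ_{(2k+1)(1−t)} for 0 < t < 1. -/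
noncomputable def muB_lt (t : ℝ) : Measure ℝ :=
  Measure.sum fun k : ℕ =>
    (ENNReal.ofReal ((1 - t) * t ^ k)) • Measure.dirac ((2 * (k : ℝ) + 1) * (1 - t))

theorem stmt3 (t : ℝ) (ht0 : 0 < t) (ht1 : t < 1) :
    IsProbabilityMeasure (muB_lt t) ∧
    (∀ n : ℕ, ∫ x, x ^ n ∂(muB_lt t) = polyB n t) ∧
    (∀ n : ℕ, ∑' k : ℕ, (1 - t) ^ (n + 1) * (2 * (k : ℝ) + 1) ^ n * t ^ k = polyB n t) := by
  have h1t : (0:ℝ) < 1 - t := by linarith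
  have hca : ∀ k : ℕ, (0:ℝ) ≤ (1 - t) * t ^ k := fun k => by positivity
  have han : ∀ k : ℕ, (0:ℝ) ≤ (2 * (k : ℝ) + 1) * (1 - t) := fun k => by positivity
  have hsumgeo : Summable (fun k : ℕ => (1 - t) * t ^ k) :=
    (summable_geometric_of_lt_one ht0.le ht1).mul_left _
  have hprob : IsProbabilityMeasure (muB_lt t) := by
    constructor
    rw [muB_lt, Measure.sum_apply _ MeasurableSet.univ]
    have hterm : ∀ k : ℕ, ((ENNReal.ofReal ((1 - t) * t ^ k)) •
        Measure.dirac ((2 * (k : ℝ) + 1) * (1 - t))) Set.univ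
          = ENNReal.ofReal ((1 - t) * t ^ k) := by
      intro k
      rw [Measure.smul_apply, measure_univ, smul_eq_mul, mul_one]
    rw [tsum_congr hterm, ← ENNReal.ofReal_tsum_of_nonneg hca hsumgeo]
    rw [tsum_mul_left, tsum_geometric_of_lt_one ht0.le ht1,
      mul_inv_cancel₀ (ne_of_gt h1t), ENNReal.ofReal_one]
  refine ⟨hprob, ?_, fun n => (hasSum_final n ht0 ht1).tsum_eq⟩
  intro n
  have hsum2 : Summable (fun k : ℕ => (1 - t) * t ^ k * ((2 * (k : ℝ) + 1) * (1 - t)) ^ n) := by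
    apply (hasSum_final n ht0 ht1).summable.congr
    intro k
    rw [mul_pow]
    ring
  have hint : Integrable (fun x : ℝ => x ^ n) (muB_lt t) := by
    constructor
    · exact (continuous_pow n).aestronglyMeasurable
    · rw [hasFiniteIntegral_def]
      rw [muB_lt, lintegral_sum_measure]
      have hterm : ∀ k : ℕ,
          ∫⁻ x, ‖x ^ n‖ₑ ∂((ENNReal.ofReal ((1 - t) * t ^ k)) •
            Measure.dirac ((2 * (k : ℝ) + 1) * (1 - t)))
          = ENNReal.ofReal ((1 - t) * t ^ k * ((2 * (k : ℝ) + 1) * (1 - t)) ^ n) := by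
        intro k
        rw [lintegral_smul_measure, lintegral_dirac]
        rw [Real.enorm_eq_ofReal (by positivity : (0:ℝ) ≤ ((2 * (k:ℝ) + 1) * (1 - t)) ^ n)]
        rw [smul_eq_mul, ← ENNReal.ofReal_mul (hca k)]
      rw [tsum_congr hterm]
      rw [← ENNReal.ofReal_tsum_of_nonneg (fun k => by positivity) hsum2]
      exact ENNReal.ofReal_lt_top
  rw [muB_lt, integral_sum_measure (by rw [← muB_lt]; exact hint)]
  have hterm : ∀ k : ℕ,
      ∫ x, x ^ n ∂((ENNReal.ofReal ((1 - t) * t ^ k)) •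
        Measure.dirac ((2 * (k : ℝ) + 1) * (1 - t)))
      = (1 - t) * t ^ k * ((2 * (k : ℝ) + 1) * (1 - t)) ^ n := by
    intro k
    rw [integral_smul_measure, integral_dirac, ENNReal.toReal_ofReal (hca k), smul_eq_mul]
  rw [tsum_congr hterm]
  have hfin2 : HasSum (fun k : ℕ => (1 - t) * t ^ k * ((2 * (k : ℝ) + 1) * (1 - t)) ^ n)
      (polyB n t) := by
    have e : (fun k : ℕ => (1 - t) * t ^ k * ((2 * (k : ℝ) + 1) * (1 - t)) ^ n)
        = fun k : ℕ => (1 - t) ^ (n + 1) * (2 * (k : ℝ) + 1) ^ n * t ^ k :=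
      funext fun k => by rw [mul_pow]; ring
    rw [e]
    exact hasSum_final n ht0 ht1
  exact hfin2.tsum_eq
end Analytic
end

section
/- The numbers D̃(n,k) satisfy the recurrence D̃(n,k) = (k+1)·D̃(n−1,k) + (n−k)·D̃(n−1,k−1) + k·D(n−1,k) + (n−k+1)·D(n−1,k−1) for all 0 < k < n, together with the boundary conditions D̃(n,0) = 0 for all n ≥ 0 and D̃(n,n) = 0 if n is even, D̃(n,n) = 1 if n is odd. -/
open MeasureTheory Finset

abbrev Wt (n : ℕ) := Equiv.Perm (Fin n) × (Fin n → Bool)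

def vW {n : ℕ} (w : Wt n) (i : Fin n) : ℤ :=
  if w.2 i then ((w.1 i : ℕ) : ℤ) + 1 else -(((w.1 i : ℕ) : ℤ) + 1)

lemma vW_bound {n : ℕ} (w : Wt n) (i : Fin n) : -(n:ℤ) ≤ vW w i ∧ vW w i ≤ n ∧ vW w i ≠ 0 := by
  have := (w.1 i).isLt
  unfold vW
  split_ifs <;> constructor <;> push_cast <;> omega

lemma vW_natAbs {n : ℕ} (w : Wt n) (i : Fin n) : (vW w i).natAbs = (w.1 i : ℕ) + 1 := by
  unfold vW; split_ifs <;> omega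

lemma vW_inj {n : ℕ} (w : Wt n) {i j : Fin n} (h : (vW w i).natAbs = (vW w j).natAbs) :
    i = j := by
  rw [vW_natAbs, vW_natAbs] at h
  exact w.1.injective (Fin.ext (by omega))

lemma vW_eq_imp {n : ℕ} (w : Wt n) {i j : Fin n} (h : vW w i = vW w j) : i = j :=
  vW_inj w (by rw [h])

lemma vW_ne_neg {n : ℕ} (w : Wt n) (i j : Fin n) : vW w i ≠ -vW w j := by
  intro h
  have hn : (vW w i).natAbs = (vW w j).natAbs := by rw [h]; simp
  have := vW_inj w hn
  subst this
  have := (vW_bound w i).2.2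
  omega

lemma vW_neg_iff {n : ℕ} (w : Wt n) (i : Fin n) : vW w i < 0 ↔ w.2 i = false := by
  have := (w.1 i).isLt
  cases hh : w.2 i <;> simp [vW, hh] <;> omega

def ofWfun {n : ℕ} (w : Wt n) (x : BSet n) : BSet n :=
  if h : 0 < x.1 then
    ⟨vW w ⟨x.1.toNat - 1, by have := x.2; simp only [Finset.mem_Icc] at this; omega⟩,
      by have := vW_bound w ⟨x.1.toNat - 1, by have := x.2; simp only [Finset.mem_Icc] at this; omega⟩
         simp only [Finset.mem_Icc]; omega⟩
  else if h2 : x.1 < 0 then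
    ⟨-vW w ⟨(-x.1).toNat - 1, by have := x.2; simp only [Finset.mem_Icc] at this; omega⟩,
      by have := vW_bound w ⟨(-x.1).toNat - 1, by have := x.2; simp only [Finset.mem_Icc] at this; omega⟩
         simp only [Finset.mem_Icc]; omega⟩
  else ⟨0, by simp⟩

lemma ofWfun_inj {n : ℕ} (w : Wt n) : Function.Injective (ofWfun w) := by
  intro x y hxy
  have hx := x.2; have hy := y.2
  simp only [Finset.mem_Icc] at hx hy
  have hv := congrArg Subtype.val hxy
  unfold ofWfun at hv
  apply Subtype.ext
  by_cases h1 : 0 < x.1 <;> by_cases h2 : 0 < y.1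
  · simp only [dif_pos h1, dif_pos h2] at hv
    have := congrArg Fin.val (vW_eq_imp w hv)
    simp only at this
    omega
  · by_cases h3 : y.1 < 0
    · simp only [dif_pos h1, dif_neg h2, dif_pos h3] at hv
      exact absurd hv (vW_ne_neg w _ _)
    · simp only [dif_pos h1, dif_neg h2, dif_neg h3] at hv
      exact absurd hv (vW_bound w _).2.2
  · by_cases h3 : x.1 < 0
    · simp only [dif_neg h1, dif_pos h3, dif_pos h2] at hv
      exact absurd hv.symm (vW_ne_neg w _ _)
    · simp only [dif_neg h1, dif_neg h3, dif_pos h2] at hv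
      exact absurd hv.symm (vW_bound w _).2.2
  · by_cases h3 : x.1 < 0 <;> by_cases h4 : y.1 < 0
    · simp only [dif_neg h1, dif_pos h3, dif_neg h2, dif_pos h4] at hv
      have := congrArg Fin.val (vW_eq_imp w (neg_injective hv))
      simp only at this
      omega
    · simp only [dif_neg h1, dif_pos h3, dif_neg h2, dif_neg h4] at hv
      exact absurd (neg_eq_zero.mp hv) (vW_bound w _).2.2
    · simp only [dif_neg h1, dif_neg h3, dif_neg h2, dif_pos h4] at hv
      exact absurd (neg_eq_zero.mp hv.symm) (vW_bound w _).2.2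
    · omega

noncomputable def permW {n : ℕ} (w : Wt n) : Equiv.Perm (BSet n) :=
  Equiv.ofBijective (ofWfun w) (Finite.injective_iff_bijective.mp (ofWfun_inj w))

lemma permW_apply {n : ℕ} (w : Wt n) (x : BSet n) : permW w x = ofWfun w x := rfl

lemma posB_val {n : ℕ} (i : Fin n) : (posB i).1 = ((i : ℕ) : ℤ) + 1 := rfl

lemma permW_posB {n : ℕ} (w : Wt n) (i : Fin n) : (permW w (posB i)).1 = vW w i := by
  rw [permW_apply]
  have hv := posB_val i
  have hpos : (0:ℤ) < (posB i).1 := by omega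
  unfold ofWfun
  rw [dif_pos hpos]
  show vW w _ = vW w i
  congr 1

lemma negB_val {n : ℕ} (x : BSet n) : (negB x).1 = -x.1 := rfl

lemma permW_signed {n : ℕ} (w : Wt n) : IsSigned (permW w) := by
  intro x
  rw [permW_apply, permW_apply]
  have hneg := negB_val x
  unfold ofWfun
  rcases lt_trichotomy x.1 0 with h | h | h
  · rw [dif_pos (show 0 < (negB x).1 by omega), dif_neg (show ¬ 0 < x.1 by omega),
      dif_pos h]
    show vW w _ = - - vW w _
    rw [neg_neg]
    congr 1
  · rw [dif_neg (show ¬ 0 < (negB x).1 by omega), dif_neg (show ¬ (negB x).1 < 0 by omega),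
      dif_neg (show ¬ 0 < x.1 by omega), dif_neg (show ¬ x.1 < 0 by omega)]
    show (0:ℤ) = -0
    simp
  · rw [dif_neg (show ¬ 0 < (negB x).1 by omega), dif_pos (show (negB x).1 < 0 by omega),
      dif_pos h]
    show -vW w _ = -vW w _
    rw [neg_inj]
    congr 1
    apply Fin.ext
    show (-(negB x).1).toNat - 1 = x.1.toNat - 1
    omega

def negW {n : ℕ} (w : Wt n) : ℕ := (Finset.univ.filter fun i : Fin n => w.2 i = false).card

def dW {n : ℕ} (w : Wt n) : ℕ := descCount ((0:ℤ) :: List.ofFn (vW w))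

lemma negCount_permW {n : ℕ} (w : Wt n) : negCount (permW w) = negW w := by
  unfold negCount negW
  congr 1
  apply Finset.filter_congr
  intro i _
  rw [permW_posB, vW_neg_iff]

lemma descB_permW {n : ℕ} (w : Wt n) : descB (permW w) = dW w := by
  unfold descB dW
  have : (fun i : Fin n => ((permW w) (posB i)).1) = vW w := funext (permW_posB w)
  rw [this]

lemma permW_inj {n : ℕ} : Function.Injective (permW (n := n)) := by
  intro w w' h
  have hv : ∀ i, vW w i = vW w' i := by
    intro i
    rw [← permW_posB, ← permW_posB, h]
  have hb : w.2 = w'.2 := by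
    funext i
    have h1 := vW_neg_iff w i
    have h2 := vW_neg_iff w' i
    rw [hv i] at h1
    cases hh : w.2 i <;> cases hh' : w'.2 i <;> simp [hh, hh'] at h1 h2 ⊢ <;> omega
  have ha : w.1 = w'.1 := by
    apply Equiv.ext
    intro i
    have h1 := vW_natAbs w i
    have h2 := vW_natAbs w' i
    rw [hv i] at h1
    apply Fin.ext
    omega
  exact Prod.ext ha hb

lemma zeroBSet_mem {n : ℕ} : (0:ℤ) ∈ Finset.Icc (-(n:ℤ)) (n:ℤ) := by simp

lemma sigma_zero {n : ℕ} (σ : Equiv.Perm (BSet n)) (hσ : IsSigned σ) :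
    (σ ⟨0, zeroBSet_mem⟩).1 = 0 := by
  have := hσ ⟨0, zeroBSet_mem⟩
  have hneg : negB (⟨0, zeroBSet_mem⟩ : BSet n) = ⟨0, zeroBSet_mem⟩ := by
    apply Subtype.ext; simp [negB]
  rw [hneg] at this
  omega

lemma permW_surj {n : ℕ} (σ : Equiv.Perm (BSet n)) (hσ : IsSigned σ) :
    ∃ w : Wt n, permW w = σ := by
  have hmem : ∀ i : Fin n, (σ (posB i)).1 ∈ Finset.Icc (-(n:ℤ)) (n:ℤ) := fun i => (σ (posB i)).2
  have hne : ∀ i : Fin n, (σ (posB i)).1 ≠ 0 := by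
    intro i hzero
    have : σ (posB i) = σ ⟨0, zeroBSet_mem⟩ := by
      apply Subtype.ext
      rw [hzero, sigma_zero σ hσ]
    have := σ.injective this
    have := congrArg Subtype.val this
    simp [posB] at this
    omega
  have hbound : ∀ i : Fin n, (σ (posB i)).1.natAbs - 1 < n := by
    intro i
    have := hmem i
    simp only [Finset.mem_Icc] at this
    have := hne i
    omega
  set p : Fin n → Fin n := fun i => ⟨(σ (posB i)).1.natAbs - 1, hbound i⟩ with hp
  have hpinj : Function.Injective p := by
    intro i j hij
    have hij' : (σ (posB i)).1.natAbs = (σ (posB j)).1.natAbs := by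
      have := congrArg Fin.val hij
      simp only [hp] at this
      have := hne i; have := hne j
      omega
    have habs : (σ (posB i)).1 = (σ (posB j)).1 ∨ (σ (posB i)).1 = -(σ (posB j)).1 := by
      omega
    rcases habs with hh | hh
    · have := σ.injective (Subtype.ext hh)
      have := congrArg Subtype.val this
      simp only [posB] at this
      exact Fin.ext (by omega)
    · exfalso
      rw [← hσ (posB j)] at hh
      have := σ.injective (Subtype.ext hh)
      have := congrArg Subtype.val this
      simp only [posB, negB] at this
      omega
  refine ⟨(Equiv.ofBijective p (Finite.injective_iff_bijective.mp hpinj),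
    fun i => decide (0 < (σ (posB i)).1)), ?_⟩
  set π : Equiv.Perm (Fin n) := Equiv.ofBijective p (Finite.injective_iff_bijective.mp hpinj)
    with hπ
  have hvW : ∀ i : Fin n, vW (π, fun i => decide (0 < (σ (posB i)).1)) i = (σ (posB i)).1 := by
    intro i
    unfold vW
    simp only
    have hπi : (π i : ℕ) = (σ (posB i)).1.natAbs - 1 := rfl
    have hmemi := hmem i; simp only [Finset.mem_Icc] at hmemi
    have := hne i
    by_cases hpos : 0 < (σ (posB i)).1
    · rw [if_pos (by simpa using hpos), hπi]; omega
    · rw [if_neg (by simpa using hpos), hπi]; omega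
  apply Equiv.ext
  intro x
  apply Subtype.ext
  rw [permW_apply]
  have hx := x.2; simp only [Finset.mem_Icc] at hx
  unfold ofWfun
  rcases lt_trichotomy x.1 0 with h | h | h
  · rw [dif_neg (by omega), dif_pos h]
    have hidx : ((-x.1).toNat - 1 : ℕ) < n := by omega
    have hxeq : x = negB (posB ⟨(-x.1).toNat - 1, hidx⟩) := by
      apply Subtype.ext
      simp only [negB, posB]
      omega
    have hrhs : (σ x).1 = -(σ (posB ⟨(-x.1).toNat - 1, hidx⟩)).1 := by
      conv_lhs => rw [hxeq]
      exact hσ _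
    rw [hrhs]
    show -vW _ _ = _
    rw [hvW]
  · rw [dif_neg (by omega), dif_neg (by omega)]
    have hxeq : x = (⟨0, zeroBSet_mem⟩ : BSet n) := Subtype.ext (show x.1 = 0 by omega)
    show (0:ℤ) = _
    rw [hxeq, sigma_zero σ hσ]
  · rw [dif_pos h]
    have hidx : (x.1.toNat - 1 : ℕ) < n := by omega
    have hxeq : x = posB ⟨x.1.toNat - 1, hidx⟩ := by
      apply Subtype.ext
      simp only [posB]
      omega
    have hrhs : (σ x).1 = (σ (posB ⟨x.1.toNat - 1, hidx⟩)).1 := by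
      conv_lhs => rw [hxeq]
    rw [hrhs]
    show vW _ _ = _
    rw [hvW]

lemma card_transfer (n k : ℕ) (P : ℕ → Prop) [DecidablePred P] :
    Fintype.card {σ : Equiv.Perm (BSet n) // (IsSigned σ ∧ P (negCount σ)) ∧ descB σ = k}
    = ((Finset.univ : Finset (Wt n)).filter (fun w => P (negW w) ∧ dW w = k)).card := by
  rw [← Fintype.card_subtype]
  apply Fintype.card_congr
  apply Equiv.symm
  apply Equiv.ofBijective
    (f := fun w : {w : Wt n // P (negW w) ∧ dW w = k} =>
      (⟨permW w.1, ⟨⟨permW_signed w.1, by rw [negCount_permW]; exact w.2.1⟩,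
        by rw [descB_permW]; exact w.2.2⟩⟩ :
        {σ : Equiv.Perm (BSet n) // (IsSigned σ ∧ P (negCount σ)) ∧ descB σ = k}))
  constructor
  · intro w w' h
    exact Subtype.ext (permW_inj (congrArg Subtype.val h))
  · rintro ⟨σ, ⟨⟨hs, hp⟩, hd⟩⟩
    obtain ⟨w, hw⟩ := permW_surj σ hs
    refine ⟨⟨w, ?_, ?_⟩, ?_⟩
    · rw [← negCount_permW, hw]; exact hp
    · rw [← descB_permW, hw]; exact hd
    · exact Subtype.ext hw

lemma eulerianDt_eq (n k : ℕ) :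
    eulerianDt n k
    = ((Finset.univ : Finset (Wt n)).filter (fun w => ¬ Even (negW w) ∧ dW w = k)).card := by
  rw [eulerianDt]
  exact card_transfer n k (fun m => ¬ Even m)

lemma eulerianD_eq (n k : ℕ) :
    eulerianD n k
    = ((Finset.univ : Finset (Wt n)).filter (fun w => Even (negW w) ∧ dW w = k)).card := by
  rw [eulerianD]
  exact card_transfer n k (fun m => Even m)
lemma ofFn_insertNth {n : ℕ} (j : Fin (n+1)) (x : ℤ) (v : Fin n → ℤ) :
    List.ofFn (j.insertNth x v) = (List.ofFn v).insertIdx j x := by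
  apply List.ext_getElem
  · simp [List.length_insertIdx, j.is_le]
  · intro k h1 h2
    simp only [List.length_ofFn] at h1
    rw [List.getElem_ofFn]
    rcases lt_trichotomy k (j : ℕ) with hk | hk | hk
    · rw [List.getElem_insertIdx_of_lt hk h2]
      rw [List.getElem_ofFn]
      have hke : (⟨k, h1⟩ : Fin (n+1)) = j.succAbove ⟨k, by omega⟩ := by
        rw [Fin.succAbove_of_castSucc_lt]
        · rfl
        · exact hk
      rw [hke, Fin.insertNth_apply_succAbove]
    · subst hk
      have hje : (⟨(j:ℕ), h1⟩ : Fin (n+1)) = j := Fin.ext rfl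
      rw [hje, Fin.insertNth_apply_same,
        List.getElem_insertIdx_self h2]
    · obtain ⟨m, hm⟩ : ∃ m, k = (j:ℕ) + m + 1 := ⟨k - j - 1, by omega⟩
      subst hm
      rw [List.getElem_insertIdx_add_succ _ _ _ _ (by simp; omega)]
      rw [List.getElem_ofFn]
      have hke : (⟨(j:ℕ) + m + 1, h1⟩ : Fin (n+1)) = j.succAbove ⟨(j:ℕ)+m, by omega⟩ := by
        rw [Fin.succAbove_of_le_castSucc]
        · rfl
        · rw [Fin.le_castSucc_iff]
          simp only [Fin.lt_def, Fin.val_succ]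
          omega
      rw [hke, Fin.insertNth_apply_succAbove]

def insFun {n : ℕ} (j : Fin (n+1)) (π : Equiv.Perm (Fin n)) : Fin (n+1) → Fin (n+1) :=
  j.insertNth (Fin.last n) (fun i => (π i).castSucc)

lemma insFun_same {n : ℕ} (j : Fin (n+1)) (π : Equiv.Perm (Fin n)) :
    insFun j π j = Fin.last n := Fin.insertNth_apply_same j _ _

lemma insFun_succAbove {n : ℕ} (j : Fin (n+1)) (π : Equiv.Perm (Fin n)) (i : Fin n) :
    insFun j π (j.succAbove i) = (π i).castSucc := Fin.insertNth_apply_succAbove j _ _ i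

lemma insFun_inj {n : ℕ} (j : Fin (n+1)) (π : Equiv.Perm (Fin n)) :
    Function.Injective (insFun j π) := by
  intro x y hxy
  by_cases hx : x = j <;> by_cases hy : y = j
  · rw [hx, hy]
  · exfalso
    obtain ⟨i, hi⟩ := Fin.exists_succAbove_eq hy
    rw [hx, insFun_same, ← hi, insFun_succAbove] at hxy
    exact absurd hxy.symm (Fin.castSucc_lt_last (π i)).ne
  · exfalso
    obtain ⟨i, hi⟩ := Fin.exists_succAbove_eq hx
    rw [hy, insFun_same, ← hi, insFun_succAbove] at hxy
    exact absurd hxy (Fin.castSucc_lt_last (π i)).ne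
  · obtain ⟨i, hi⟩ := Fin.exists_succAbove_eq hx
    obtain ⟨i', hi'⟩ := Fin.exists_succAbove_eq hy
    rw [← hi, ← hi', insFun_succAbove, insFun_succAbove] at hxy
    rw [← hi, ← hi', π.injective (Fin.castSucc_injective n hxy)]

noncomputable def insPerm {n : ℕ} (j : Fin (n+1)) (π : Equiv.Perm (Fin n)) :
    Equiv.Perm (Fin (n+1)) :=
  Equiv.ofBijective (insFun j π) (Finite.injective_iff_bijective.mp (insFun_inj j π))

lemma insPerm_same {n : ℕ} (j : Fin (n+1)) (π : Equiv.Perm (Fin n)) :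
    insPerm j π j = Fin.last n := insFun_same j π

lemma insPerm_succAbove {n : ℕ} (j : Fin (n+1)) (π : Equiv.Perm (Fin n)) (i : Fin n) :
    insPerm j π (j.succAbove i) = (π i).castSucc := insFun_succAbove j π i

noncomputable def insW {n : ℕ} (j : Fin (n+1)) (s : Bool) (w : Wt n) : Wt (n+1) :=
  (insPerm j w.1, j.insertNth s w.2)

lemma insW_fst {n : ℕ} (j : Fin (n+1)) (s : Bool) (w : Wt n) :
    (insW j s w).1 = insPerm j w.1 := rfl

lemma insW_snd {n : ℕ} (j : Fin (n+1)) (s : Bool) (w : Wt n) :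
    (insW j s w).2 = j.insertNth s w.2 := rfl

def insVal (n : ℕ) (s : Bool) : ℤ := if s then ((n:ℤ)+1) else -((n:ℤ)+1)

lemma vW_insW {n : ℕ} (j : Fin (n+1)) (s : Bool) (w : Wt n) :
    vW (insW j s w) = j.insertNth (insVal n s) (vW w) := by
  funext i
  by_cases hi : i = j
  · subst hi
    rw [Fin.insertNth_apply_same]
    unfold vW insVal
    rw [insW_fst, insW_snd, insPerm_same, Fin.insertNth_apply_same, Fin.val_last]
  · obtain ⟨m, hm⟩ := Fin.exists_succAbove_eq hi
    rw [← hm, Fin.insertNth_apply_succAbove]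
    unfold vW
    rw [insW_fst, insW_snd, insPerm_succAbove, Fin.insertNth_apply_succAbove,
      Fin.coe_castSucc]

lemma negW_insW {n : ℕ} (j : Fin (n+1)) (s : Bool) (w : Wt n) :
    negW (insW j s w) = (if s then 0 else 1) + negW w := by
  unfold negW
  rw [Finset.card_filter, Finset.card_filter, Fin.sum_univ_succAbove _ j]
  congr 1
  · rw [insW_snd, Fin.insertNth_apply_same]
    cases s <;> simp
  · apply Finset.sum_congr rfl
    intro i _
    rw [insW_snd, Fin.insertNth_apply_succAbove]

lemma dW_insW {n : ℕ} (j : Fin (n+1)) (s : Bool) (w : Wt n) :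
    dW (insW j s w)
      = descCount (((0:ℤ) :: List.ofFn (vW w)).insertIdx ((j:ℕ)+1) (insVal n s)) := by
  unfold dW
  rw [vW_insW, ofFn_insertNth, List.insertIdx_succ_cons]

lemma insW_inj {n : ℕ} :
    Function.Injective (fun p : (Fin (n+1) × Bool) × Wt n => insW p.1.1 p.1.2 p.2) := by
  rintro ⟨⟨j, s⟩, w⟩ ⟨⟨j', s'⟩, w'⟩ h
  simp only at h
  have hperm : insPerm j w.1 = insPerm j' w'.1 := by
    have := congrArg Prod.fst h
    rwa [insW_fst, insW_fst] at this
  have hsnd : j.insertNth s w.2 = (j'.insertNth s' w'.2 : Fin (n+1) → Bool) := by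
    have := congrArg Prod.snd h
    rwa [insW_snd, insW_snd] at this
  have hj : j = j' := by
    by_contra hne
    obtain ⟨i, hi⟩ := Fin.exists_succAbove_eq hne
    have h1 : insPerm j w.1 j = Fin.last n := insPerm_same j _
    have h2 := insPerm_succAbove j' w'.1 i
    rw [hi] at h2
    rw [hperm, h2] at h1
    exact absurd h1 (Fin.castSucc_lt_last (w'.1 i)).ne
  subst hj
  have hs : s = s' := by
    have h1 : (j.insertNth s w.2 : Fin (n+1) → Bool) j = s := Fin.insertNth_apply_same j _ _
    have h2 : (j.insertNth s' w'.2 : Fin (n+1) → Bool) j = s' := Fin.insertNth_apply_same j _ _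
    rw [hsnd, h2] at h1
    exact h1.symm
  have hw2 : w.2 = w'.2 := by
    funext i
    have h1 : (j.insertNth s w.2 : Fin (n+1) → Bool) (j.succAbove i) = w.2 i :=
      Fin.insertNth_apply_succAbove j _ _ i
    have h2 : (j.insertNth s' w'.2 : Fin (n+1) → Bool) (j.succAbove i) = w'.2 i :=
      Fin.insertNth_apply_succAbove j _ _ i
    rw [← h1, hsnd, h2]
  have hw1 : w.1 = w'.1 := by
    apply Equiv.ext
    intro i
    have h1 := insPerm_succAbove j w.1 i
    have h2 := insPerm_succAbove j w'.1 i
    rw [hperm, h2] at h1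
    exact Fin.castSucc_injective n h1.symm
  rw [Prod.ext hw1 hw2, hs]

lemma insW_bij {n : ℕ} :
    Function.Bijective (fun p : (Fin (n+1) × Bool) × Wt n => insW p.1.1 p.1.2 p.2) := by
  rw [Fintype.bijective_iff_injective_and_card]
  refine ⟨insW_inj, ?_⟩
  simp only [Fintype.card_prod, Fintype.card_perm, Fintype.card_fun, Fintype.card_fin,
    Fintype.card_bool]
  rw [Nat.factorial_succ]
  ring

lemma descCount_cons_cons {a b : ℤ} {l : List ℤ} :
    descCount (a :: b :: l) = (if b < a then 1 else 0) + descCount (b :: l) := rfl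

lemma descCount_single {a : ℤ} : descCount [a] = 0 := rfl

lemma card_filter_range_succ (p : ℕ → Prop) [DecidablePred p] (N : ℕ) :
    ((range (N+1)).filter p).card
      = (if p 0 then 1 else 0) + ((range N).filter (fun t => p (t+1))).card := by
  rw [Finset.card_filter, Finset.card_filter, Finset.sum_range_succ']
  ring

lemma big_count (x : ℤ) : ∀ (l : List ℤ) (a : ℤ), (∀ b ∈ a :: l, b < x) →
    ((range (l.length+1)).filter
      (fun t => descCount ((a :: l).insertIdx (t+1) x) = descCount (a :: l))).card
      = descCount (a :: l) + 1 := by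
  intro l
  induction l with
  | nil =>
      intro a h
      simp only [List.length_nil, Nat.zero_add, Finset.range_one]
      rw [Finset.filter_singleton]
      have hax : a < x := h a (by simp)
      simp [List.insertIdx, descCount, not_lt.2 hax.le, descCount_single]
  | cons b l' ih =>
      intro a h
      have hax : a < x := h a (by simp)
      have hbx : b < x := h b (by simp)
      rw [show (b :: l').length + 1 = (l'.length + 1) + 1 by simp, card_filter_range_succ]
      have h1 : (a :: b :: l').insertIdx 1 x = a :: x :: b :: l' := rfl
      have h2 : ∀ t : ℕ, (a :: b :: l').insertIdx (t+1+1) x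
          = a :: (b :: l').insertIdx (t+1) x := fun t => rfl
      have h3 : ∀ t : ℕ, (b :: l').insertIdx (t+1) x = b :: l'.insertIdx t x := fun t => rfl
      have key : ∀ t : ℕ,
          (descCount ((a :: b :: l').insertIdx (t+1+1) x) = descCount (a :: b :: l'))
          ↔ (descCount ((b :: l').insertIdx (t+1) x) = descCount (b :: l')) := by
        intro t
        rw [h2, h3 t, descCount_cons_cons, descCount_cons_cons, ← h3 t]
        omega
      rw [Finset.filter_congr (fun t _ => by rw [key t])]
      rw [ih b (by intro c hc; exact h c (by simp at hc ⊢; tauto))]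
      rw [h1, descCount_cons_cons, descCount_cons_cons, descCount_cons_cons]
      rw [if_neg (not_lt.2 hax.le), if_pos hbx]
      split_ifs <;> omega

lemma big_or (x : ℤ) : ∀ (l : List ℤ) (a : ℤ), (∀ b ∈ a :: l, b < x) → ∀ t < l.length + 1,
    descCount ((a :: l).insertIdx (t+1) x) = descCount (a :: l)
    ∨ descCount ((a :: l).insertIdx (t+1) x) = descCount (a :: l) + 1 := by
  intro l
  induction l with
  | nil =>
      intro a h t ht
      have ht0 : t = 0 := by simpa using ht
      subst ht0
      have hax : a < x := h a (by simp)
      simp [List.insertIdx, descCount, not_lt.2 hax.le]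
  | cons b l' ih =>
      intro a h t ht
      have hax : a < x := h a (by simp)
      have hbx : b < x := h b (by simp)
      match t with
      | 0 =>
          have h1 : (a :: b :: l').insertIdx 1 x = a :: x :: b :: l' := rfl
          rw [h1, descCount_cons_cons, descCount_cons_cons, descCount_cons_cons]
          split_ifs <;> omega
      | (t+1) =>
          have h2 : (a :: b :: l').insertIdx (t+1+1) x
            = a :: (b :: l').insertIdx (t+1) x := rfl
          have h3 : (b :: l').insertIdx (t+1) x = b :: l'.insertIdx t x := rfl
          have := ih b (by intro c hc; exact h c (by simp at hc ⊢; tauto)) t (by simpa using ht)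
          rw [h2, h3, descCount_cons_cons, descCount_cons_cons, ← h3]
          omega

lemma small_count (x : ℤ) : ∀ (l : List ℤ) (a : ℤ), (∀ b ∈ a :: l, x < b) →
    ((range (l.length+1)).filter
      (fun t => descCount ((a :: l).insertIdx (t+1) x) = descCount (a :: l))).card
      = descCount (a :: l) := by
  intro l
  induction l with
  | nil =>
      intro a h
      simp only [List.length_nil, Nat.zero_add, Finset.range_one]
      rw [Finset.filter_singleton]
      have hax : x < a := h a (by simp)
      simp [List.insertIdx, descCount, hax]
  | cons b l' ih =>
      intro a h
      have hax : x < a := h a (by simp)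
      have hbx : x < b := h b (by simp)
      rw [show (b :: l').length + 1 = (l'.length + 1) + 1 by simp, card_filter_range_succ]
      have h1 : (a :: b :: l').insertIdx 1 x = a :: x :: b :: l' := rfl
      have h2 : ∀ t : ℕ, (a :: b :: l').insertIdx (t+1+1) x
          = a :: (b :: l').insertIdx (t+1) x := fun t => rfl
      have h3 : ∀ t : ℕ, (b :: l').insertIdx (t+1) x = b :: l'.insertIdx t x := fun t => rfl
      have key : ∀ t : ℕ,
          (descCount ((a :: b :: l').insertIdx (t+1+1) x) = descCount (a :: b :: l'))
          ↔ (descCount ((b :: l').insertIdx (t+1) x) = descCount (b :: l')) := by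
        intro t
        rw [h2, h3 t, descCount_cons_cons, descCount_cons_cons, ← h3 t]
        omega
      rw [Finset.filter_congr (fun t _ => by rw [key t])]
      rw [ih b (by intro c hc; exact h c (by simp at hc ⊢; tauto))]
      rw [h1, descCount_cons_cons, descCount_cons_cons, descCount_cons_cons]
      rw [if_pos hax, if_neg (not_lt.2 hbx.le)]
      split_ifs <;> omega

lemma small_or (x : ℤ) : ∀ (l : List ℤ) (a : ℤ), (∀ b ∈ a :: l, x < b) → ∀ t < l.length + 1,
    descCount ((a :: l).insertIdx (t+1) x) = descCount (a :: l)
    ∨ descCount ((a :: l).insertIdx (t+1) x) = descCount (a :: l) + 1 := by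
  intro l
  induction l with
  | nil =>
      intro a h t ht
      have ht0 : t = 0 := by simpa using ht
      subst ht0
      have hax : x < a := h a (by simp)
      simp [List.insertIdx, descCount, hax]
  | cons b l' ih =>
      intro a h t ht
      have hax : x < a := h a (by simp)
      have hbx : x < b := h b (by simp)
      match t with
      | 0 =>
          have h1 : (a :: b :: l').insertIdx 1 x = a :: x :: b :: l' := rfl
          rw [h1, descCount_cons_cons, descCount_cons_cons, descCount_cons_cons]
          split_ifs <;> omega
      | (t+1) =>
          have h2 : (a :: b :: l').insertIdx (t+1+1) x
            = a :: (b :: l').insertIdx (t+1) x := rfl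
          have h3 : (b :: l').insertIdx (t+1) x = b :: l'.insertIdx t x := rfl
          have := ih b (by intro c hc; exact h c (by simp at hc ⊢; tauto)) t (by simpa using ht)
          rw [h2, h3, descCount_cons_cons, descCount_cons_cons, ← h3]
          omega

lemma descCount_le : ∀ (l : List ℤ) (a : ℤ), descCount (a :: l) ≤ l.length := by
  intro l
  induction l with
  | nil => intro a; simp [descCount]
  | cons b l' ih =>
      intro a
      rw [descCount_cons_cons]
      have := ih b
      split_ifs <;> simp <;> omega

lemma count_target (x : ℤ) (l : List ℤ) (a : ℤ) (k : ℕ)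
    (hor : ∀ t < l.length + 1,
      descCount ((a :: l).insertIdx (t+1) x) = descCount (a :: l)
      ∨ descCount ((a :: l).insertIdx (t+1) x) = descCount (a :: l) + 1)
    (c : ℕ)
    (hc : ((range (l.length+1)).filter
      (fun t => descCount ((a :: l).insertIdx (t+1) x) = descCount (a :: l))).card = c) :
    ((range (l.length+1)).filter
      (fun t => descCount ((a :: l).insertIdx (t+1) x) = k)).card
    = if k = descCount (a :: l) then c
      else if k = descCount (a :: l) + 1 then l.length + 1 - c else 0 := by
  set d := descCount (a :: l) with hd
  by_cases h1 : k = d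
  · rw [if_pos h1, h1, hc]
  · rw [if_neg h1]
    by_cases h2 : k = d + 1
    · rw [if_pos h2]
      have hsplit := Finset.card_filter_add_card_filter_not
        (s := range (l.length+1))
        (p := fun t => descCount ((a :: l).insertIdx (t+1) x) = d)
      have heq : (range (l.length+1)).filter
          (fun t => ¬ descCount ((a :: l).insertIdx (t+1) x) = d)
          = (range (l.length+1)).filter
          (fun t => descCount ((a :: l).insertIdx (t+1) x) = k) := by
        apply Finset.filter_congr
        intro t ht
        simp only [Finset.mem_range] at ht
        have := hor t ht
        simp only [eq_iff_iff, h2]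
        constructor
        · intro hne; omega
        · intro hh; omega
      rw [heq, hc] at hsplit
      simp only [Finset.card_range] at hsplit
      omega
    · rw [if_neg h2]
      rw [Finset.card_eq_zero, Finset.filter_eq_empty_iff]
      intro t ht
      simp only [Finset.mem_range] at ht
      have := hor t ht
      omega


lemma mem_M_lt_big {m : ℕ} (w : Wt m) :
    ∀ b ∈ (0:ℤ) :: List.ofFn (vW w), b < (m:ℤ) + 1 := by
  intro b hb
  rcases List.mem_cons.mp hb with h | h
  · omega
  · obtain ⟨i, hi⟩ := List.mem_ofFn.mp h
    have := (vW_bound w i).2.1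
    omega

lemma mem_M_gt_small {m : ℕ} (w : Wt m) :
    ∀ b ∈ (0:ℤ) :: List.ofFn (vW w), -((m:ℤ)+1) < b := by
  intro b hb
  rcases List.mem_cons.mp hb with h | h
  · omega
  · obtain ⟨i, hi⟩ := List.mem_ofFn.mp h
    have := (vW_bound w i).1
    omega

lemma inner_sum_true {m k : ℕ} (hk : 0 < k) (w : Wt m) :
    (∑ j : Fin (m+1),
      if (¬ Even (negW (insW j true w)) ∧ dW (insW j true w) = k) then 1 else 0)
    = if ¬ Even (negW w) then
        (if dW w = k then k+1 else if dW w = k-1 then m+1-k else 0) else 0 := by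
  have hneg : ∀ j : Fin (m+1), negW (insW j true w) = negW w := by
    intro j; rw [negW_insW]; simp
  have hd : ∀ j : Fin (m+1), dW (insW j true w)
      = descCount (((0:ℤ) :: List.ofFn (vW w)).insertIdx ((j:ℕ)+1) (((m:ℤ))+1)) := by
    intro j
    rw [dW_insW]
    rfl
  by_cases hE : Even (negW w)
  · simp only [hneg, hE, not_true_eq_false, false_and, if_false, Finset.sum_const_zero]
  · simp only [hneg, hE, not_false_eq_true, true_and, if_true]
    have hlen : (List.ofFn (vW w)).length = m := List.length_ofFn
    have hsum : (∑ j : Fin (m+1),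
        if dW (insW j true w) = k then 1 else 0)
        = ((Finset.range (m+1)).filter (fun t =>
            descCount (((0:ℤ) :: List.ofFn (vW w)).insertIdx (t+1) (((m:ℤ))+1)) = k)).card := by
      rw [Finset.card_filter, ← Fin.sum_univ_eq_sum_range]
      apply Finset.sum_congr rfl
      intro j _
      rw [hd j]
    have hsum2 : (∑ j : Fin (m+1),
        if (dW (insW j true w) = k) then 1 else 0)
        = (∑ j : Fin (m+1),
        if (dW (insW j true w) = k) then 1 else 0) := rfl
    rw [hsum]
    have hcount := count_target ((m:ℤ)+1) (List.ofFn (vW w)) 0 k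
      (by rw [hlen]
          intro t ht
          exact big_or ((m:ℤ)+1) (List.ofFn (vW w)) 0 (mem_M_lt_big w) t (by rw [hlen]; omega))
      (descCount ((0:ℤ) :: List.ofFn (vW w)) + 1)
      (big_count ((m:ℤ)+1) (List.ofFn (vW w)) 0 (mem_M_lt_big w))
    rw [hlen] at hcount
    rw [hcount]
    have hdesc_le : descCount ((0:ℤ) :: List.ofFn (vW w)) ≤ m := by
      have := descCount_le (List.ofFn (vW w)) (0:ℤ)
      omega
    have hdw : dW w = descCount ((0:ℤ) :: List.ofFn (vW w)) := rfl
    rw [← hdw] at *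
    split_ifs <;> omega

lemma inner_sum_false {m k : ℕ} (hk : 0 < k) (w : Wt m) :
    (∑ j : Fin (m+1),
      if (¬ Even (negW (insW j false w)) ∧ dW (insW j false w) = k) then 1 else 0)
    = if Even (negW w) then
        (if dW w = k then k else if dW w = k-1 then m+2-k else 0) else 0 := by
  have hneg : ∀ j : Fin (m+1), negW (insW j false w) = 1 + negW w := by
    intro j; rw [negW_insW]; simp
  have hd : ∀ j : Fin (m+1), dW (insW j false w)
      = descCount (((0:ℤ) :: List.ofFn (vW w)).insertIdx ((j:ℕ)+1) (-((m:ℤ)+1))) := by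
    intro j
    rw [dW_insW]
    rfl
  have hpar : (¬ Even (1 + negW w)) ↔ Even (negW w) := by
    rw [Nat.even_iff, Nat.even_iff]
    omega
  by_cases hE : Even (negW w)
  · rw [if_pos hE]
    have hcond : ∀ j : Fin (m+1),
        ((¬ Even (negW (insW j false w)) ∧ dW (insW j false w) = k))
        ↔ (dW (insW j false w) = k) := by
      intro j
      rw [hneg j, hpar]
      simp [hE]
    have hsum : (∑ j : Fin (m+1),
        if (¬ Even (negW (insW j false w)) ∧ dW (insW j false w) = k) then 1 else 0)
        = ((Finset.range (m+1)).filter (fun t =>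
            descCount (((0:ℤ) :: List.ofFn (vW w)).insertIdx (t+1) (-((m:ℤ)+1))) = k)).card := by
      rw [Finset.card_filter, ← Fin.sum_univ_eq_sum_range]
      apply Finset.sum_congr rfl
      intro j _
      rw [← hd j]
      simp only [hcond j]
    rw [hsum]
    have hlen : (List.ofFn (vW w)).length = m := List.length_ofFn
    have hcount := count_target (-((m:ℤ)+1)) (List.ofFn (vW w)) 0 k
      (by rw [hlen]
          intro t ht
          exact small_or (-((m:ℤ)+1)) (List.ofFn (vW w)) 0 (mem_M_gt_small w) t
            (by rw [hlen]; omega))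
      (descCount ((0:ℤ) :: List.ofFn (vW w)))
      (small_count (-((m:ℤ)+1)) (List.ofFn (vW w)) 0 (mem_M_gt_small w))
    rw [hlen] at hcount
    rw [hcount]
    have hdesc_le : descCount ((0:ℤ) :: List.ofFn (vW w)) ≤ m := by
      have := descCount_le (List.ofFn (vW w)) (0:ℤ)
      omega
    have hdw : dW w = descCount ((0:ℤ) :: List.ofFn (vW w)) := rfl
    rw [← hdw] at *
    split_ifs <;> omega
  · rw [if_neg hE]
    apply Finset.sum_eq_zero
    intro j _
    rw [if_neg]
    rw [hneg j, hpar]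
    tauto

lemma recDt (m k : ℕ) (hk : 0 < k) (hkm : k ≤ m) :
    eulerianDt (m+1) k
      = (k+1) * eulerianDt m k + (m+1-k) * eulerianDt m (k-1)
        + k * eulerianD m k + (m+2-k) * eulerianD m (k-1) := by
  rw [eulerianDt_eq, eulerianDt_eq, eulerianDt_eq, eulerianD_eq, eulerianD_eq]
  have h0 : ((Finset.univ : Finset (Wt (m+1))).filter
        (fun w => ¬ Even (negW w) ∧ dW w = k)).card
      = ∑ p : (Fin (m+1) × Bool) × Wt m,
          if (¬ Even (negW (insW p.1.1 p.1.2 p.2)) ∧ dW (insW p.1.1 p.1.2 p.2) = k)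
          then 1 else 0 := by
    rw [Finset.card_filter]
    exact (Fintype.sum_equiv (Equiv.ofBijective _ insW_bij)
      (fun p => if (¬ Even (negW (insW p.1.1 p.1.2 p.2)) ∧ dW (insW p.1.1 p.1.2 p.2) = k)
          then 1 else 0)
      (fun x => if (¬ Even (negW x) ∧ dW x = k) then 1 else 0) (fun p => rfl)).symm
  rw [h0, Fintype.sum_prod_type, Finset.sum_comm]
  have hin : ∀ w : Wt m,
      (∑ jb : Fin (m+1) × Bool,
        if (¬ Even (negW (insW jb.1 jb.2 w)) ∧ dW (insW jb.1 jb.2 w) = k) then 1 else 0)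
      = (k+1) * (if (¬ Even (negW w) ∧ dW w = k) then 1 else 0)
        + (m+1-k) * (if (¬ Even (negW w) ∧ dW w = k-1) then 1 else 0)
        + k * (if (Even (negW w) ∧ dW w = k) then 1 else 0)
        + (m+2-k) * (if (Even (negW w) ∧ dW w = k-1) then 1 else 0) := by
    intro w
    rw [Fintype.sum_prod_type]
    have hbool : ∀ j : Fin (m+1),
        (∑ s : Bool,
          if (¬ Even (negW (insW j s w)) ∧ dW (insW j s w) = k) then 1 else 0)
        = (if (¬ Even (negW (insW j true w)) ∧ dW (insW j true w) = k) then 1 else 0)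
          + (if (¬ Even (negW (insW j false w)) ∧ dW (insW j false w) = k) then 1 else 0) := by
      intro j
      rw [Fintype.sum_bool]
    rw [Finset.sum_congr rfl (fun j _ => hbool j), Finset.sum_add_distrib,
      inner_sum_true hk w, inner_sum_false hk w]
    have hne : ¬ (k - 1 = k) := by omega
    by_cases hE : Even (negW w) <;> by_cases h1 : dW w = k <;> by_cases h2 : dW w = k-1 <;>
      simp [hE, h1, h2, hne] <;> omega
  rw [Finset.sum_congr rfl (fun w _ => hin w)]
  rw [Finset.sum_add_distrib, Finset.sum_add_distrib, Finset.sum_add_distrib,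
    ← Finset.mul_sum, ← Finset.mul_sum, ← Finset.mul_sum, ← Finset.mul_sum,
    ← Finset.card_filter, ← Finset.card_filter, ← Finset.card_filter, ← Finset.card_filter]

lemma desc_zero_le : ∀ (l : List ℤ) (a : ℤ), descCount (a :: l) = 0 → ∀ b ∈ l, a ≤ b := by
  intro l
  induction l with
  | nil => intro a _ b hb; simp at hb
  | cons b l' ih =>
      intro a h c hc
      rw [descCount_cons_cons] at h
      have h1 : ¬ (b < a) := by by_contra hh; rw [if_pos hh] at h; omega
      have h2 : descCount (b :: l') = 0 := by split_ifs at h <;> omega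
      rcases List.mem_cons.mp hc with rfl | hc'
      · omega
      · have := ih b h2 c hc'
        omega

lemma eulerianDt_zero (n : ℕ) : eulerianDt n 0 = 0 := by
  rw [eulerianDt_eq, Finset.card_eq_zero, Finset.filter_eq_empty_iff]
  intro w _
  rintro ⟨hodd, hd⟩
  apply hodd
  have hnz : negW w = 0 := by
    unfold negW
    rw [Finset.card_eq_zero, Finset.filter_eq_empty_iff]
    intro i _
    have hpos : (0:ℤ) ≤ vW w i := by
      apply desc_zero_le (List.ofFn (vW w)) 0 hd
      exact List.mem_ofFn.mpr ⟨i, rfl⟩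
    intro hfalse
    have := (vW_neg_iff w i).mpr hfalse
    omega
  rw [hnz]
  exact Even.zero

lemma desc_chain : ∀ (l : List ℤ) (a : ℤ), List.Chain (· > ·) a l → descCount (a :: l) = l.length := by
  intro l
  induction l with
  | nil => intro a _; rfl
  | cons b l' ih =>
      intro a h
      simp only [List.Chain, List.isChain_cons_cons] at h
      rw [descCount_cons_cons, if_pos h.1, ih b h.2]
      simp only [List.length_cons]
      omega

lemma desc_max_chain : ∀ (l : List ℤ) (a : ℤ),
    descCount (a :: l) = l.length → List.Chain (· > ·) a l := by
  intro l
  induction l with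
  | nil => intro a _; exact List.Chain.nil
  | cons b l' ih =>
      intro a h
      rw [descCount_cons_cons] at h
      have hle := descCount_le l' b
      simp only [List.length_cons] at h
      have hba : b < a := by by_contra hh; rw [if_neg hh] at h; omega
      have h2 : descCount (b :: l') = l'.length := by rw [if_pos hba] at h; omega
      exact List.Chain.cons hba (ih b h2)

theorem chain_iff_get_old {α : Type*} {R : α → α → Prop} {a : α} {l : List α} :
    List.Chain R a l ↔
    (∀ h : 0 < l.length, R a (l.get ⟨0, h⟩)) ∧
      ∀ (i : ℕ) (h : i < l.length - 1),
        R (l.get ⟨i, by omega⟩) (l.get ⟨i+1, by omega⟩) := by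
  show List.IsChain R (a :: l) ↔ _
  rw [List.isChain_iff_getElem]
  constructor
  · intro h
    exact ⟨fun h0 => h 0 (by simp; omega), fun i hi => h (i+1) (by simp; omega)⟩
  · rintro ⟨h0, h1⟩ i hi
    cases i with
    | zero => exact h0 (by simp at hi; omega)
    | succ i => exact h1 i (by simp at hi; omega)

def w0 (n : ℕ) : Wt n := (Equiv.refl _, fun _ => false)

lemma vW_w0 (n : ℕ) (i : Fin n) : vW (w0 n) i = -(((i:ℕ):ℤ)+1) := by
  unfold vW w0
  simp

lemma negW_w0 (n : ℕ) : negW (w0 n) = n := by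
  unfold negW w0
  simp

lemma chain_w0 (n : ℕ) : List.Chain (· > ·) (0:ℤ) (List.ofFn (vW (w0 n))) := by
  rw [chain_iff_get_old]
  constructor
  · intro h
    rw [List.get_ofFn, vW_w0]
    have : (0:ℤ) < ((Fin.cast (by simp) (⟨0, h⟩ : Fin (List.ofFn (vW (w0 n))).length) : Fin n) : ℕ) + 1 := by
      positivity
    omega
  · intro i h
    rw [List.get_ofFn, List.get_ofFn, vW_w0, vW_w0]
    simp only [Fin.coe_cast]
    show -((i:ℤ)+1) > -(((i+1 : ℕ) : ℤ)+1)
    push_cast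
    omega

lemma dW_w0 (n : ℕ) : dW (w0 n) = n := by
  unfold dW
  rw [desc_chain _ _ (chain_w0 n), List.length_ofFn]

lemma dW_max_unique (n : ℕ) (w : Wt n) (h : dW w = n) : w = w0 n := by
  unfold dW at h
  have hlen : (List.ofFn (vW w)).length = n := List.length_ofFn
  have hchain := desc_max_chain (List.ofFn (vW w)) 0 (by rw [hlen]; exact h)
  rw [chain_iff_get_old] at hchain
  obtain ⟨h0, hcons⟩ := hchain
  have hcons' : ∀ (t : ℕ) (ht : t + 1 < n),
      vW w ⟨t, by omega⟩ > vW w ⟨t+1, ht⟩ := by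
    intro t ht
    have := hcons t (by rw [hlen]; omega)
    rw [List.get_ofFn, List.get_ofFn] at this
    convert this using 2 <;> (apply Fin.ext; simp)
  have hallneg : ∀ (t : ℕ) (ht : t < n), vW w ⟨t, ht⟩ < 0 := by
    intro t
    induction t with
    | zero =>
        intro ht
        have := h0 (by rw [hlen]; omega)
        rw [List.get_ofFn] at this
        simp only [Fin.cast_mk] at this
        exact this
    | succ t iht =>
        intro ht
        have := hcons' t ht
        have := iht (by omega)
        omega
  have hval : ∀ i : Fin n, vW w i = -(((w.1 i : ℕ) : ℤ) + 1) := by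
    intro i
    have h1 := vW_natAbs w i
    have h2 := hallneg i.1 i.2
    have h3 : (⟨i.1, i.2⟩ : Fin n) = i := Fin.ext rfl
    rw [h3] at h2
    omega
  have hA : ∀ (t : ℕ) (ht : t < n), t ≤ (w.1 ⟨t, ht⟩ : ℕ) := by
    intro t
    induction t with
    | zero => intro ht; omega
    | succ t iht =>
        intro ht
        have hlt := hcons' t ht
        rw [hval, hval] at hlt
        have := iht (by omega)
        omega
  have hsum : ∑ i : Fin n, (w.1 i : ℕ) = ∑ i : Fin n, (i : ℕ) :=
    Equiv.sum_comp w.1 (fun i => (i : ℕ))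
  have hptws := (Finset.sum_eq_sum_iff_of_le
    (f := fun i : Fin n => (i : ℕ)) (g := fun i : Fin n => (w.1 i : ℕ))
    (fun i _ => hA i.1 i.2)).mp (by rw [hsum])
  have hperm : w.1 = Equiv.refl (Fin n) := by
    apply Equiv.ext
    intro i
    have := hptws i (Finset.mem_univ i)
    exact Fin.ext this.symm
  have hbool : w.2 = fun _ => false := by
    funext i
    have h2 := hallneg i.1 i.2
    have h3 : (⟨i.1, i.2⟩ : Fin n) = i := Fin.ext rfl
    rw [h3] at h2
    exact (vW_neg_iff w i).mp h2
  unfold w0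
  exact Prod.ext hperm hbool

lemma eulerianDt_diag_even (n : ℕ) (h : Even n) : eulerianDt n n = 0 := by
  rw [eulerianDt_eq, Finset.card_eq_zero, Finset.filter_eq_empty_iff]
  intro w _
  rintro ⟨hodd, hd⟩
  apply hodd
  rw [dW_max_unique n w hd, negW_w0]
  exact h

lemma eulerianDt_diag_odd (n : ℕ) (h : Odd n) : eulerianDt n n = 1 := by
  rw [eulerianDt_eq, Finset.card_eq_one]
  refine ⟨w0 n, ?_⟩
  ext w
  simp only [Finset.mem_filter, Finset.mem_univ, true_and, Finset.mem_singleton]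
  constructor
  · rintro ⟨-, hd⟩
    exact dW_max_unique n w hd
  · rintro rfl
    refine ⟨?_, dW_w0 n⟩
    rw [negW_w0]
    exact Nat.not_even_iff_odd.mpr h

theorem stmt7 :
    (∀ n k : ℕ, 0 < k → k < n →
      eulerianDt n k = (k + 1) * eulerianDt (n - 1) k + (n - k) * eulerianDt (n - 1) (k - 1)
        + k * eulerianD (n - 1) k + (n - k + 1) * eulerianD (n - 1) (k - 1)) ∧
    (∀ n : ℕ, eulerianDt n 0 = 0) ∧
    (∀ n : ℕ, Even n → eulerianDt n n = 0) ∧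
    (∀ n : ℕ, Odd n → eulerianDt n n = 1) := by
  refine ⟨?_, eulerianDt_zero, eulerianDt_diag_even, eulerianDt_diag_odd⟩
  intro n k hk hkn
  obtain ⟨m, rfl⟩ : ∃ m, n = m + 1 := ⟨n - 1, by omega⟩
  have hkm : k ≤ m := by omega
  have h1 : m + 1 - 1 = m := by omega
  have h2 : m + 1 - k + 1 = m + 2 - k := by omega
  rw [h1, h2]
  exact recDt m k hk hkm
end

section
/- For all 0 ≤ k ≤ n, D(n,k) − D̃(n,k) = (−1)^k · C(n,k), where C(n,k) is the binomial coefficient (this is an identity of integers). -/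
open MeasureTheory Finset

namespace Stmt8Aux

variable {n : ℕ}

def zeroB (n : ℕ) : BSet n := ⟨0, by simp⟩

lemma negB_negB (x : BSet n) : negB (negB x) = x := Subtype.ext (neg_neg _)

lemma negB_val (x : BSet n) : (negB x).1 = -x.1 := rfl

lemma posB_val (i : Fin n) : (posB i).1 = (i : ℕ) + 1 := rfl

lemma signed_zero {σ : Equiv.Perm (BSet n)} (hσ : IsSigned σ) : σ (zeroB n) = zeroB n := by
  have h := hσ (zeroB n)
  have h0 : negB (zeroB n) = zeroB n := Subtype.ext (by simp [negB, zeroB])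
  rw [h0] at h
  exact Subtype.ext (by show (σ (zeroB n)).1 = 0; omega)

lemma word_ne_zero {σ : Equiv.Perm (BSet n)} (hσ : IsSigned σ) (i : Fin n) :
    (σ (posB i)).1 ≠ 0 := by
  intro h
  have h2 : σ (posB i) = σ (zeroB n) := by
    rw [signed_zero hσ]; exact Subtype.ext h
  have h3 := σ.injective h2
  have : (posB i).1 = (zeroB n).1 := by rw [h3]
  simp [posB_val, zeroB] at this
  omega

lemma descCount_ofFn (g : ℕ → ℤ) : ∀ m : ℕ,
    descCount (List.ofFn fun i : Fin m => g i) =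
      ∑ i ∈ Finset.range (m - 1), if g (i + 1) < g i then 1 else 0
  | 0 => by simp [descCount]
  | 1 => by simp [descCount]
  | (m+2) => by
    rw [List.ofFn_succ, List.ofFn_succ]
    simp only [Fin.val_succ, Fin.val_zero, descCount]
    have h2 : (g 1 :: List.ofFn fun i : Fin m => g (i.1+1+1)) =
        List.ofFn fun i : Fin (m+1) => g (i.1+1) := by
      rw [List.ofFn_succ]; simp
    rw [h2, descCount_ofFn (fun i => g (i+1)) (m+1)]
    simp only [Nat.add_sub_cancel]
    rw [show m + 2 - 1 = m + 1 from rfl,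
      Finset.sum_range_succ' (fun i => if g (i+1) < g i then 1 else 0) m]
    simp
    omega

/-- the word of `σ`, as a function on `ℕ` with `gword σ 0 = 0`. -/
def gword (σ : Equiv.Perm (BSet n)) (i : ℕ) : ℤ :=
  if h : 1 ≤ i ∧ i ≤ n then (σ (posB ⟨i - 1, by omega⟩)).1 else 0

lemma gword_zero (σ : Equiv.Perm (BSet n)) : gword σ 0 = 0 := by simp [gword]

lemma gword_succ (σ : Equiv.Perm (BSet n)) (i : Fin n) :
    gword σ (i.1 + 1) = (σ (posB i)).1 := by
  have h : 1 ≤ i.1 + 1 ∧ i.1 + 1 ≤ n := ⟨by omega, by have := i.isLt; omega⟩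
  rw [gword, dif_pos h]
  congr 1

lemma gword_large (σ : Equiv.Perm (BSet n)) {i : ℕ} (hi : n < i) : gword σ i = 0 := by
  rw [gword, dif_neg]; omega

lemma descB_eq (σ : Equiv.Perm (BSet n)) :
    descB σ = ∑ i ∈ Finset.range n, if gword σ (i+1) < gword σ i then 1 else 0 := by
  have hl : ((0:ℤ) :: List.ofFn fun i : Fin n => (σ (posB i)).1) =
      List.ofFn fun i : Fin (n+1) => gword σ i := by
    apply List.ext_getElem
    · simp
    · intro i h1 h2
      match i with
      | 0 => simpa using (gword_zero σ).symm
      | (j+1) =>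
        simp only [List.getElem_cons_succ, List.getElem_ofFn]
        exact (gword_succ σ ⟨j, by simpa using h2⟩).symm
  rw [descB, hl, descCount_ofFn]
  simp

lemma negCount_eq (σ : Equiv.Perm (BSet n)) :
    negCount σ = ∑ i : Fin n, if (σ (posB i)).1 < 0 then 1 else 0 := by
  rw [negCount, Finset.card_filter]

/-- absolute values of the word -/
def uabs (σ : Equiv.Perm (BSet n)) (i : ℕ) : ℕ := (gword σ (i+1)).natAbs

lemma uabs_pos {σ : Equiv.Perm (BSet n)} (hσ : IsSigned σ) {i : ℕ} (hi : i < n) :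
    1 ≤ uabs σ i := by
  have := word_ne_zero hσ ⟨i, hi⟩
  rw [uabs, show i + 1 = (⟨i, hi⟩ : Fin n).1 + 1 from rfl, gword_succ]
  omega

lemma uabs_le {σ : Equiv.Perm (BSet n)} {i : ℕ} (hi : i < n) : uabs σ i ≤ n := by
  rw [uabs, show i + 1 = (⟨i, hi⟩ : Fin n).1 + 1 from rfl, gword_succ]
  have := (σ (posB ⟨i, hi⟩)).2
  rw [Finset.mem_Icc] at this
  omega

lemma uabs_inj {σ : Equiv.Perm (BSet n)} (hσ : IsSigned σ) {i j : ℕ}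
    (hi : i < n) (hj : j < n) (h : uabs σ i = uabs σ j) : i = j := by
  rw [uabs, uabs, show i + 1 = (⟨i, hi⟩ : Fin n).1 + 1 from rfl,
    show j + 1 = (⟨j, hj⟩ : Fin n).1 + 1 from rfl, gword_succ, gword_succ] at h
  rcases Int.natAbs_eq_natAbs_iff.mp h with h | h
  · have := σ.injective (Subtype.ext h)
    have : (posB (⟨i, hi⟩ : Fin n)).1 = (posB (⟨j, hj⟩ : Fin n)).1 := by rw [this]
    simp [posB_val] at this
    omega
  · have h2 : (σ (posB ⟨i, hi⟩)).1 = (σ (negB (posB ⟨j, hj⟩))).1 := by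
      rw [hσ]; exact h
    have := σ.injective (Subtype.ext h2)
    have : (posB (⟨i, hi⟩ : Fin n)).1 = (negB (posB ⟨j, hj⟩)).1 := by rw [this]
    simp [posB_val, negB_val] at this
    omega

end Stmt8Aux

namespace Stmt8Aux

variable {n : ℕ}

/-- flipping the sign at an interior local max of absolute values preserves descents -/
lemma desc_flip (g g' : ℕ → ℤ) (m j : ℕ) (hj : j + 1 < m)
    (hsame : ∀ i, i ≠ j + 1 → g' i = g i) (hflip : g' (j+1) = -(g (j+1)))
    (hl : |g j| < |g (j+1)|) (hr : |g (j+2)| < |g (j+1)|) :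
    (∑ i ∈ Finset.range m, if g (i+1) < g i then (1:ℕ) else 0) =
      ∑ i ∈ Finset.range m, if g' (i+1) < g' i then 1 else 0 := by
  have hjm : j ∈ Finset.range m := Finset.mem_range.mpr (by omega)
  have hj1m : j + 1 ∈ (Finset.range m).erase j := by
    rw [Finset.mem_erase]; exact ⟨by omega, Finset.mem_range.mpr hj⟩
  have key : ∀ f : ℕ → ℕ, ∑ i ∈ Finset.range m, f i =
      f j + f (j+1) + ∑ i ∈ ((Finset.range m).erase j).erase (j+1), f i := by
    intro f
    rw [← Finset.add_sum_erase _ f hjm, ← Finset.add_sum_erase _ f hj1m]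
    ring
  rw [key, key]
  have htail : ∀ i ∈ ((Finset.range m).erase j).erase (j+1),
      (if g (i+1) < g i then (1:ℕ) else 0) = if g' (i+1) < g' i then 1 else 0 := by
    intro i hi
    rw [Finset.mem_erase, Finset.mem_erase] at hi
    rw [hsame i (by omega), hsame (i+1) (by omega)]
  rw [Finset.sum_congr rfl htail]
  congr 1
  -- now the two flipped terms
  rw [hsame j (by omega), hsame (j+2) (by omega), hflip]
  set a := g j
  set b := g (j+1)
  set c := g (j+2)
  have h1 : a < |b| := lt_of_le_of_lt (le_abs_self a) hl
  have h2 : -|b| < a := lt_of_lt_of_le (neg_lt_neg hl) (neg_abs_le a)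
  have h3 : c < |b| := lt_of_le_of_lt (le_abs_self c) hr
  have h4 : -|b| < c := lt_of_lt_of_le (neg_lt_neg hr) (neg_abs_le c)
  rcases abs_choice b with h5 | h5 <;> rw [h5] at h1 h2 h3 h4 <;>
    [ (have hb : 0 < b := by omega); (have hb : b < 0 := by omega) ]
  · rw [if_neg (by omega), if_pos (by omega), if_pos (by omega), if_neg (by omega)]
  · rw [if_pos (by omega), if_neg (by omega), if_neg (by omega), if_pos (by omega)]

end Stmt8Aux

namespace Stmt8Aux

variable {n : ℕ}

def FixP (n : ℕ) (σ : Equiv.Perm (BSet n)) : Prop :=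
  ∀ i : Fin n, (σ (posB i)).1.natAbs = (i : ℕ) + 1

instance (σ : Equiv.Perm (BSet n)) : Decidable (FixP n σ) :=
  inferInstanceAs (Decidable (∀ i : Fin n, (σ (posB i)).1.natAbs = (i : ℕ) + 1))

lemma uabs_word (σ : Equiv.Perm (BSet n)) (i : Fin n) :
    uabs σ (i : ℕ) = (σ (posB i)).1.natAbs := by
  rw [uabs, gword_succ]

lemma fixP_iff (σ : Equiv.Perm (BSet n)) :
    FixP n σ ↔ ∀ i, i < n → uabs σ i = i + 1 := by
  constructor
  · intro h i hi
    rw [show i = ((⟨i, hi⟩ : Fin n) : ℕ) from rfl, uabs_word]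
    exact h ⟨i, hi⟩
  · intro h i
    rw [← uabs_word]
    exact h i i.isLt

lemma fixP_of_no_descent {σ : Equiv.Perm (BSet n)} (hσ : IsSigned σ)
    (hnd : ∀ j, j + 1 < n → ¬ (uabs σ (j+1) < uabs σ j)) : FixP n σ := by
  have mono : ∀ j, j + 1 < n → uabs σ j < uabs σ (j+1) := by
    intro j hj
    have h1 := not_lt.mp (hnd j hj)
    rcases lt_or_eq_of_le h1 with h | h
    · exact h
    · exact absurd (uabs_inj hσ (by omega) (by omega) h) (by omega)
  have lower : ∀ i, i < n → i + 1 ≤ uabs σ i := by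
    intro i
    induction i with
    | zero => intro h; exact uabs_pos hσ h
    | succ i ih =>
      intro h
      have h1 := mono i (by omega)
      have h2 := ih (by omega)
      omega
  have step : ∀ d i, i + d < n → uabs σ i + d ≤ uabs σ (i + d) := by
    intro d
    induction d with
    | zero => intro i _; simp
    | succ d ih =>
      intro i h
      have h1 := ih i (by omega)
      have h2 := mono (i + d) (by omega)
      have h3 : i + (d + 1) = (i + d) + 1 := by omega
      rw [h3]
      omega
  have upper : ∀ i, i < n → uabs σ i ≤ i + 1 := by
    intro i hi
    have h1 := step (n - 1 - i) i (by omega)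
    have h2 : i + (n - 1 - i) = n - 1 := by omega
    rw [h2] at h1
    have h3 := uabs_le (σ := σ) (i := n - 1) (by omega)
    omega
  rw [fixP_iff]
  intro i hi
  have := lower i hi
  have := upper i hi
  omega

lemma exists_descent_of_not_fix {σ : Equiv.Perm (BSet n)} (hσ : IsSigned σ)
    (hnf : ¬ FixP n σ) : ∃ j, j + 1 < n ∧ uabs σ (j+1) < uabs σ j := by
  by_contra h
  push_neg at h
  exact hnf (fixP_of_no_descent hσ (fun j hj => not_lt.mpr (h j hj)))

lemma desc_eq_neg_of_fix {σ : Equiv.Perm (BSet n)} (hfix : FixP n σ) :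
    descB σ = negCount σ := by
  have habs : ∀ i, i ≤ n → (gword σ i).natAbs = i := by
    intro i hi
    match i with
    | 0 => simp [gword_zero]
    | (j+1) =>
      have hj : j < n := by omega
      rw [show j + 1 = ((⟨j, hj⟩ : Fin n) : ℕ) + 1 from rfl, gword_succ]
      exact hfix ⟨j, hj⟩
  have hneg : negCount σ = ∑ i ∈ Finset.range n, if gword σ (i+1) < 0 then 1 else 0 := by
    rw [negCount_eq, ← Fin.sum_univ_eq_sum_range (fun i => if gword σ (i+1) < 0 then 1 else 0) n]
    apply Finset.sum_congr rfl
    intro i _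
    rw [gword_succ]
  rw [descB_eq, hneg]
  apply Finset.sum_congr rfl
  intro i hi
  rw [Finset.mem_range] at hi
  have h1 := habs i (by omega)
  have h2 := habs (i+1) (by omega)
  congr 1
  simp only [eq_iff_iff]
  omega

end Stmt8Aux

namespace Stmt8Aux

variable {n : ℕ}

lemma negB_injective : Function.Injective (negB (n := n)) := by
  intro x y h
  have : (negB x).1 = (negB y).1 := by rw [h]
  exact Subtype.ext (by simp only [negB_val] at this; omega)

lemma swap_negB {v : BSet n} (hv : v.1 ≠ 0) (y : BSet n) :
    Equiv.swap v (negB v) (negB y) = negB (Equiv.swap v (negB v) y) := by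
  by_cases hy1 : y = v
  · subst hy1
    rw [Equiv.swap_apply_right, Equiv.swap_apply_left, negB_negB]
  by_cases hy2 : y = negB v
  · subst hy2
    rw [negB_negB, Equiv.swap_apply_left, Equiv.swap_apply_right]
  · rw [Equiv.swap_apply_of_ne_of_ne hy1 hy2,
      Equiv.swap_apply_of_ne_of_ne (fun h => hy2 (by rw [← negB_negB y, h]))
        (fun h => hy1 (negB_injective h))]

lemma signed_swap_mul {σ : Equiv.Perm (BSet n)} (hσ : IsSigned σ) {v : BSet n} (hv : v.1 ≠ 0) :
    IsSigned (Equiv.swap v (negB v) * σ) := by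
  intro x
  have h1 : σ (negB x) = negB (σ x) := Subtype.ext (by rw [hσ x]; rfl)
  show (Equiv.swap v (negB v) (σ (negB x))).1 = -(Equiv.swap v (negB v) (σ x)).1
  rw [h1, swap_negB hv, negB_val]

open scoped Classical in
noncomputable def flipP (σ : Equiv.Perm (BSet n)) : Equiv.Perm (BSet n) :=
  if hP : ∃ j, j + 1 < n ∧ uabs σ (j+1) < uabs σ j then
    (Equiv.swap (σ (posB ⟨Nat.find hP, by have := (Nat.find_spec hP).1; omega⟩))
      (negB (σ (posB ⟨Nat.find hP, by have := (Nat.find_spec hP).1; omega⟩)))) * σ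
  else σ

lemma flipP_eq (σ : Equiv.Perm (BSet n)) (hP : ∃ j, j + 1 < n ∧ uabs σ (j+1) < uabs σ j)
    (j : ℕ) (hjn : j + 1 < n) (hj : Nat.find hP = j) :
    flipP σ = Equiv.swap (σ (posB ⟨j, by omega⟩)) (negB (σ (posB ⟨j, by omega⟩))) * σ := by
  subst hj
  unfold flipP
  rw [dif_pos hP]

section FlipLemmas

variable {σ : Equiv.Perm (BSet n)} (hσ : IsSigned σ)
  (hP : ∃ j, j + 1 < n ∧ uabs σ (j+1) < uabs σ j)

lemma flip_apply_posB_self (jF : Fin n) (hjF : (jF : ℕ) = Nat.find hP) :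
    flipP σ (posB jF) = negB (σ (posB jF)) := by
  have hjn : (jF : ℕ) + 1 < n := by rw [hjF]; exact (Nat.find_spec hP).1
  have h := flipP_eq σ hP jF.1 hjn hjF.symm
  rw [h]
  exact Equiv.swap_apply_left _ _

include hσ in
lemma flip_apply_posB_other (i : Fin n)
    (hij : (i : ℕ) ≠ Nat.find hP) : flipP σ (posB i) = σ (posB i) := by
  have hjn : Nat.find hP + 1 < n := (Nat.find_spec hP).1
  have h := flipP_eq σ hP (Nat.find hP) hjn rfl
  rw [h]
  show Equiv.swap _ _ (σ (posB i)) = σ (posB i)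
  apply Equiv.swap_apply_of_ne_of_ne
  · intro h2
    have h3 := σ.injective h2
    have h4 : (posB i).1 = (posB (⟨Nat.find hP, by omega⟩ : Fin n)).1 := by rw [h3]
    simp only [posB_val, Fin.val_mk] at h4
    exact hij (by omega)
  · intro h2
    have h3 : (σ (posB i)).1.natAbs = (σ (posB (⟨Nat.find hP, by omega⟩ : Fin n))).1.natAbs := by
      rw [h2, negB_val]; omega
    rw [← uabs_word, ← uabs_word] at h3
    exact hij (uabs_inj hσ i.isLt (by omega) h3)

include hσ hP in
lemma flip_uabs : ∀ i, uabs (flipP σ) i = uabs σ i := by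
  intro i
  by_cases hi : i < n
  · by_cases hij : i = Nat.find hP
    · rw [uabs, uabs, show i + 1 = ((⟨i, hi⟩ : Fin n) : ℕ) + 1 from rfl,
        gword_succ, gword_succ, flip_apply_posB_self hP ⟨i, hi⟩ hij, negB_val,
        Int.natAbs_neg]
    · rw [uabs, uabs, show i + 1 = ((⟨i, hi⟩ : Fin n) : ℕ) + 1 from rfl,
        gword_succ, gword_succ, flip_apply_posB_other hσ hP ⟨i, hi⟩ hij]
  · rw [uabs, uabs, gword_large _ (by omega), gword_large _ (by omega)]

include hσ hP in
lemma flip_gword_other : ∀ i, i ≠ Nat.find hP + 1 → gword (flipP σ) i = gword σ i := by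
  intro i hi
  match i with
  | 0 => rw [gword_zero, gword_zero]
  | (m+1) =>
    by_cases hm : m < n
    · rw [show m + 1 = ((⟨m, hm⟩ : Fin n) : ℕ) + 1 from rfl, gword_succ, gword_succ,
        flip_apply_posB_other hσ hP ⟨m, hm⟩ (by simpa using fun h => hi (by omega))]
    · rw [gword_large _ (by omega), gword_large _ (by omega)]

lemma flip_gword_self :
    gword (flipP σ) (Nat.find hP + 1) = -(gword σ (Nat.find hP + 1)) := by
  have hjn : Nat.find hP + 1 < n := (Nat.find_spec hP).1
  rw [show Nat.find hP + 1 = ((⟨Nat.find hP, by omega⟩ : Fin n) : ℕ) + 1 from rfl,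
    gword_succ, gword_succ, flip_apply_posB_self hP ⟨Nat.find hP, by omega⟩ rfl, negB_val]

include hσ hP in
lemma flip_descB : descB (flipP σ) = descB σ := by
  have hjn : Nat.find hP + 1 < n := (Nat.find_spec hP).1
  rw [descB_eq, descB_eq]
  refine (desc_flip (gword σ) (gword (flipP σ)) n (Nat.find hP) hjn ?_ ?_ ?_ ?_).symm
  · exact flip_gword_other hσ hP
  · exact flip_gword_self hP
  · match hcase : Nat.find hP with
    | 0 =>
      have h1 := uabs_pos hσ (i := 0) (σ := σ) (by omega)
      rw [gword_zero]
      have h2 : gword σ 1 ≠ 0 := by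
        intro h
        rw [uabs, h] at h1
        simp at h1
      simp only [abs_zero]
      exact abs_pos.mpr h2
    | (m+1) =>
      have hmin := Nat.find_min hP (m := m) (by omega)
      push_neg at hmin
      have h1 : uabs σ m ≤ uabs σ (m+1) := hmin (by omega)
      have h2 : uabs σ m ≠ uabs σ (m+1) := by
        intro h
        have := uabs_inj hσ (i := m) (j := m+1) (by omega) (by omega) h
        omega
      have h3 : (gword σ (m+1)).natAbs < (gword σ (m+1+1)).natAbs := by
        rw [show (gword σ (m+1)).natAbs = uabs σ m from rfl,
          show (gword σ (m+1+1)).natAbs = uabs σ (m+1) from rfl]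
        omega
      rw [Int.abs_eq_natAbs, Int.abs_eq_natAbs]
      exact_mod_cast h3
  · have h1 : uabs σ (Nat.find hP + 1) < uabs σ (Nat.find hP) := (Nat.find_spec hP).2
    have h3 : (gword σ (Nat.find hP + 2)).natAbs < (gword σ (Nat.find hP + 1)).natAbs := by
      rw [show (gword σ (Nat.find hP + 2)).natAbs = uabs σ (Nat.find hP + 1) from rfl,
        show (gword σ (Nat.find hP + 1)).natAbs = uabs σ (Nat.find hP) from rfl]
      omega
    rw [Int.abs_eq_natAbs, Int.abs_eq_natAbs]
    exact_mod_cast h3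

include hσ hP in
lemma flip_signed : IsSigned (flipP σ) := by
  have hjn : Nat.find hP + 1 < n := (Nat.find_spec hP).1
  rw [flipP_eq σ hP (Nat.find hP) hjn rfl]
  exact signed_swap_mul hσ (word_ne_zero hσ _)

include hσ hP in
lemma flip_odd : Odd (negCount σ + negCount (flipP σ)) := by
  have hjn : Nat.find hP + 1 < n := (Nat.find_spec hP).1
  have jF : Fin n := ⟨Nat.find hP, by omega⟩
  have hsum : ∀ τ : Equiv.Perm (BSet n), negCount τ =
      (if (τ (posB (⟨Nat.find hP, by omega⟩ : Fin n))).1 < 0 then 1 else 0) +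
        ∑ i ∈ Finset.univ.erase (⟨Nat.find hP, by omega⟩ : Fin n),
          (if (τ (posB i)).1 < 0 then 1 else 0) := by
    intro τ
    rw [negCount_eq, ← Finset.add_sum_erase _ _ (Finset.mem_univ (⟨Nat.find hP, by omega⟩ : Fin n))]
  have htail : ∀ i ∈ Finset.univ.erase (⟨Nat.find hP, by omega⟩ : Fin n),
      (if ((flipP σ) (posB i)).1 < 0 then (1:ℕ) else 0) =
        if (σ (posB i)).1 < 0 then 1 else 0 := by
    intro i hi
    rw [Finset.mem_erase] at hi
    rw [flip_apply_posB_other hσ hP i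
      (fun h => hi.1 (Fin.ext (by simp only [Fin.val_mk]; omega)))]
  rw [hsum σ, hsum (flipP σ), Finset.sum_congr rfl htail]
  rw [flip_apply_posB_self hP (⟨Nat.find hP, by omega⟩ : Fin n) rfl, negB_val]
  have hv : (σ (posB (⟨Nat.find hP, by omega⟩ : Fin n))).1 ≠ 0 := word_ne_zero hσ _
  rcases lt_or_gt_of_ne hv with h | h
  · rw [if_pos h, if_neg (by omega)]
    rw [Nat.odd_iff]
    omega
  · rw [if_neg (by omega), if_pos (by omega)]
    rw [Nat.odd_iff]
    omega

end FlipLemmas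

end Stmt8Aux

namespace Stmt8Aux

variable {n : ℕ}

section FlipLemmas2

variable {σ : Equiv.Perm (BSet n)} (hσ : IsSigned σ)
  (hP : ∃ j, j + 1 < n ∧ uabs σ (j+1) < uabs σ j)

include hσ hP in
lemma flip_hP : ∃ j, j + 1 < n ∧ uabs (flipP σ) (j+1) < uabs (flipP σ) j := by
  have hu : ∀ i, uabs (flipP σ) i = uabs σ i := flip_uabs hσ hP
  simp only [hu]
  exact hP

include hσ in
lemma flip_find (hP' : ∃ j, j + 1 < n ∧ uabs (flipP σ) (j+1) < uabs (flipP σ) j) :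
    Nat.find hP' = Nat.find hP := by
  have hu : ∀ i, uabs (flipP σ) i = uabs σ i := flip_uabs hσ hP
  apply le_antisymm
  · refine Nat.find_min' hP' ⟨(Nat.find_spec hP).1, ?_⟩
    rw [hu, hu]
    exact (Nat.find_spec hP).2
  · refine Nat.find_min' hP ⟨(Nat.find_spec hP').1, ?_⟩
    rw [← hu, ← hu]
    exact (Nat.find_spec hP').2

lemma swap_cancel (v : BSet n) (τ : Equiv.Perm (BSet n)) :
    Equiv.swap (negB v) (negB (negB v)) * (Equiv.swap v (negB v) * τ) = τ := by
  rw [negB_negB, Equiv.swap_comm, ← mul_assoc, Equiv.swap_mul_self, one_mul]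

include hσ hP in
lemma flip_flip : flipP (flipP σ) = σ := by
  have hP' := flip_hP hσ hP
  have hjn : Nat.find hP + 1 < n := (Nat.find_spec hP).1
  have hfind : Nat.find hP' = Nat.find hP := flip_find hσ hP hP'
  rw [flipP_eq (flipP σ) hP' (Nat.find hP) hjn hfind,
    flip_apply_posB_self hP (⟨Nat.find hP, by omega⟩ : Fin n) rfl]
  exact (congrArg (_ * ·) (flipP_eq σ hP (Nat.find hP) hjn rfl)).trans (swap_cancel _ _)

include hσ hP in
lemma flip_ne : flipP σ ≠ σ := by
  intro h
  have hjn : Nat.find hP + 1 < n := (Nat.find_spec hP).1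
  have h1 : flipP σ (posB (⟨Nat.find hP, by omega⟩ : Fin n)) =
      σ (posB (⟨Nat.find hP, by omega⟩ : Fin n)) := by rw [h]
  rw [flip_apply_posB_self hP (⟨Nat.find hP, by omega⟩ : Fin n) rfl] at h1
  have h2 := congrArg Subtype.val h1
  rw [negB_val] at h2
  have h3 : (σ (posB (⟨Nat.find hP, by omega⟩ : Fin n))).1 = 0 := by omega
  exact word_ne_zero hσ _ h3

include hσ hP in
lemma flip_not_fix : ¬ FixP n (flipP σ) := by
  intro hfix
  rw [fixP_iff] at hfix
  have hu : ∀ i, uabs (flipP σ) i = uabs σ i := flip_uabs hσ hP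
  have hspec := Nat.find_spec hP
  have h1 := hfix (Nat.find hP) (by omega)
  have h2 := hfix (Nat.find hP + 1) (by omega)
  rw [hu] at h1 h2
  omega

end FlipLemmas2

end Stmt8Aux

namespace Stmt8Aux

variable {n : ℕ}

lemma repr_BSet (x : BSet n) :
    x = zeroB n ∨ (∃ i : Fin n, x = posB i) ∨ ∃ i : Fin n, x = negB (posB i) := by
  have hx := x.2
  rw [Finset.mem_Icc] at hx
  rcases lt_trichotomy x.1 0 with h | h | h
  · right; right
    refine ⟨⟨(-x.1).toNat - 1, by omega⟩, Subtype.ext ?_⟩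
    simp only [negB_val, posB_val, Fin.val_mk]
    omega
  · left; exact Subtype.ext h
  · right; left
    refine ⟨⟨x.1.toNat - 1, by omega⟩, Subtype.ext ?_⟩
    simp only [posB_val, Fin.val_mk]
    omega

lemma perm_eq_of_posB {σ τ : Equiv.Perm (BSet n)} (hσ : IsSigned σ) (hτ : IsSigned τ)
    (h : ∀ i : Fin n, σ (posB i) = τ (posB i)) : σ = τ := by
  apply Equiv.ext
  intro x
  rcases repr_BSet x with rfl | ⟨i, rfl⟩ | ⟨i, rfl⟩
  · rw [signed_zero hσ, signed_zero hτ]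
  · exact h i
  · exact Subtype.ext (by rw [hσ, hτ, h i])

/-- sign-flipping map associated to a set of indices -/
def flipF (s : Finset (Fin n)) (x : BSet n) : BSet n :=
  if ∃ i ∈ s, ((i : ℕ) : ℤ) + 1 = |x.1| then negB x else x

lemma flipF_cond_negB (s : Finset (Fin n)) (x : BSet n) :
    (∃ i ∈ s, ((i : ℕ) : ℤ) + 1 = |(negB x).1|) ↔ (∃ i ∈ s, ((i : ℕ) : ℤ) + 1 = |x.1|) := by
  rw [negB_val, abs_neg]

lemma flipF_invol (s : Finset (Fin n)) : Function.Involutive (flipF s) := by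
  intro x
  by_cases h : ∃ i ∈ s, ((i : ℕ) : ℤ) + 1 = |x.1|
  · have h1 : flipF s x = negB x := by rw [flipF, if_pos h]
    rw [h1, flipF, if_pos ((flipF_cond_negB s x).mpr h), negB_negB]
  · have h1 : flipF s x = x := by rw [flipF, if_neg h]
    rw [h1, h1]

def sperm (s : Finset (Fin n)) : Equiv.Perm (BSet n) := (flipF_invol s).toPerm

lemma sperm_apply (s : Finset (Fin n)) (x : BSet n) : sperm s x = flipF s x := rfl

lemma sperm_posB (s : Finset (Fin n)) (i : Fin n) :
    sperm s (posB i) = if i ∈ s then negB (posB i) else posB i := by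
  rw [sperm_apply, flipF]
  have habs : |(posB i).1| = ((i : ℕ) : ℤ) + 1 := by
    rw [posB_val]; exact abs_of_pos (by positivity)
  by_cases h : i ∈ s
  · rw [if_pos (⟨i, h, habs.symm⟩), if_pos h]
  · rw [if_neg, if_neg h]
    rintro ⟨j, hj, hje⟩
    rw [habs] at hje
    have : j = i := Fin.ext (by omega)
    exact h (this ▸ hj)

lemma sperm_signed (s : Finset (Fin n)) : IsSigned (sperm s) := by
  intro x
  rw [sperm_apply, sperm_apply, flipF, flipF]
  by_cases h : ∃ i ∈ s, ((i : ℕ) : ℤ) + 1 = |x.1|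
  · rw [if_pos ((flipF_cond_negB s x).mpr h), if_pos h]
    simp [negB_val]
  · rw [if_neg (fun hc => h ((flipF_cond_negB s x).mp hc)), if_neg h]
    rfl

lemma sperm_fix (s : Finset (Fin n)) : FixP n (sperm s) := by
  intro i
  rw [sperm_posB]
  by_cases h : i ∈ s
  · rw [if_pos h, negB_val, posB_val]; omega
  · rw [if_neg h, posB_val]; omega

lemma sperm_negCount (s : Finset (Fin n)) : negCount (sperm s) = s.card := by
  rw [negCount]
  congr 1
  apply Finset.ext
  intro i
  rw [Finset.mem_filter]
  simp only [Finset.mem_univ, true_and]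
  rw [sperm_posB]
  by_cases h : i ∈ s
  · rw [if_pos h]
    simp only [negB_val, posB_val]
    constructor
    · intro _; exact h
    · intro _; omega
  · rw [if_neg h]
    simp only [posB_val]
    constructor
    · intro hc; omega
    · intro hc; exact absurd hc h

end Stmt8Aux

namespace Stmt8Aux

variable {n : ℕ}

open Finset in
lemma card_fix_eq_choose (k : ℕ)
    (A : Finset (Equiv.Perm (BSet n)))
    (hA : A = Finset.univ.filter (fun σ => IsSigned σ ∧ descB σ = k)) :
    (A.filter (fun σ => FixP n σ)).card = n.choose k := by
  classical
  rw [show n.choose k = ((Finset.univ : Finset (Fin n)).card).choose k by rw [card_univ, Fintype.card_fin],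
    ← Finset.card_powersetCard]
  apply Finset.card_nbij' (i := fun σ => Finset.univ.filter (fun i : Fin n => (σ (posB i)).1 < 0))
    (j := fun s => sperm s)
  · intro σ hm
    rw [Finset.mem_coe, hA, Finset.mem_filter, Finset.mem_filter] at hm
    obtain ⟨⟨-, hsig, hdesc⟩, hfix⟩ := hm
    rw [Finset.mem_coe, Finset.mem_powersetCard]
    refine ⟨Finset.filter_subset _ _ |>.trans (Finset.subset_univ _), ?_⟩
    have : negCount σ = k := by rw [← desc_eq_neg_of_fix hfix, hdesc]
    exact this ▸ rfl
  · intro s hs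
    rw [Finset.mem_coe, Finset.mem_powersetCard] at hs
    rw [Finset.mem_coe, hA, Finset.mem_filter, Finset.mem_filter]
    have hd : descB (sperm s) = k := by
      rw [desc_eq_neg_of_fix (sperm_fix s), sperm_negCount, hs.2]
    exact ⟨⟨Finset.mem_univ _, sperm_signed s, hd⟩, sperm_fix s⟩
  · intro σ hm
    rw [Finset.mem_coe, hA, Finset.mem_filter, Finset.mem_filter] at hm
    obtain ⟨⟨-, hsig, hdesc⟩, hfix⟩ := hm
    apply perm_eq_of_posB (sperm_signed _) hsig
    intro i
    rw [sperm_posB]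
    have habs := hfix i
    by_cases hlt : (σ (posB i)).1 < 0
    · have hmem : i ∈ Finset.univ.filter (fun i : Fin n => (σ (posB i)).1 < 0) :=
        Finset.mem_filter.mpr ⟨Finset.mem_univ _, hlt⟩
      rw [if_pos hmem]
      refine Subtype.ext ?_
      rw [negB_val, posB_val]
      omega
    · have hnm : i ∉ Finset.univ.filter (fun i : Fin n => (σ (posB i)).1 < 0) :=
        fun hc => hlt (Finset.mem_filter.mp hc).2
      rw [if_neg hnm]
      refine Subtype.ext ?_
      rw [posB_val]
      omega
  · intro s hs
    apply Finset.ext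
    intro i
    rw [Finset.mem_filter]
    simp only [Finset.mem_univ, true_and]
    rw [sperm_posB]
    by_cases hmem : i ∈ s
    · rw [if_pos hmem]
      simp only [negB_val, posB_val]
      exact ⟨fun _ => hmem, fun _ => by omega⟩
    · rw [if_neg hmem]
      simp only [posB_val]
      exact ⟨fun hc => by omega, fun hc => absurd hc hmem⟩

end Stmt8Aux

namespace Stmt8Aux

variable {n : ℕ}

open Finset in
lemma sum_moved_zero (k : ℕ) (A : Finset (Equiv.Perm (BSet n)))
    (hA : A = Finset.univ.filter (fun σ => IsSigned σ ∧ descB σ = k)) :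
    ∑ σ ∈ A.filter (fun σ => ¬ FixP n σ), ((-1 : ℤ)) ^ (negCount σ) = 0 := by
  classical
  apply Finset.sum_involution (g := fun σ _ => flipP σ)
  · intro σ hm
    rw [Finset.mem_filter, hA, Finset.mem_filter] at hm
    obtain ⟨⟨-, hsig, -⟩, hnfix⟩ := hm
    have hP := exists_descent_of_not_fix hsig hnfix
    have hodd := flip_odd hsig hP
    rcases Nat.even_or_odd (negCount σ) with he | ho
    · have ho2 : Odd (negCount (flipP σ)) := by
        rw [Nat.odd_iff] at hodd ⊢
        rw [Nat.even_iff] at he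
        omega
      rw [Even.neg_one_pow he, Odd.neg_one_pow ho2]
      ring
    · have he2 : Even (negCount (flipP σ)) := by
        rw [Nat.odd_iff] at hodd ho
        rw [Nat.even_iff]
        omega
      rw [Odd.neg_one_pow ho, Even.neg_one_pow he2]
      ring
  · intro σ hm _
    rw [Finset.mem_filter, hA, Finset.mem_filter] at hm
    obtain ⟨⟨-, hsig, -⟩, hnfix⟩ := hm
    exact flip_ne hsig (exists_descent_of_not_fix hsig hnfix)
  · intro σ hm
    rw [Finset.mem_filter, hA, Finset.mem_filter] at hm
    obtain ⟨⟨-, hsig, hdesc⟩, hnfix⟩ := hm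
    have hP := exists_descent_of_not_fix hsig hnfix
    rw [Finset.mem_filter, hA, Finset.mem_filter]
    exact ⟨⟨Finset.mem_univ _, flip_signed hsig hP, by rw [flip_descB hsig hP, hdesc]⟩,
      flip_not_fix hsig hP⟩
  · intro σ hm
    rw [Finset.mem_filter, hA, Finset.mem_filter] at hm
    obtain ⟨⟨-, hsig, -⟩, hnfix⟩ := hm
    exact flip_flip hsig (exists_descent_of_not_fix hsig hnfix)

open Finset in
lemma main_count (n k : ℕ) :
    (eulerianD n k : ℤ) - (eulerianDt n k : ℤ) = (-1) ^ k * (n.choose k : ℤ) := by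
  classical
  set A : Finset (Equiv.Perm (BSet n)) :=
    Finset.univ.filter (fun σ => IsSigned σ ∧ descB σ = k) with hA
  have hD : eulerianD n k = (A.filter (fun σ => Even (negCount σ))).card := by
    rw [eulerianD, Fintype.card_subtype, hA, Finset.filter_filter]
    apply congrArg
    apply Finset.filter_congr
    intro σ _
    tauto
  have hDt : eulerianDt n k = (A.filter (fun σ => ¬ Even (negCount σ))).card := by
    rw [eulerianDt, Fintype.card_subtype, hA, Finset.filter_filter]
    apply congrArg
    apply Finset.filter_congr
    intro σ _
    tauto
  have hsum : ∑ σ ∈ A, ((-1 : ℤ)) ^ (negCount σ) =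
      ((A.filter (fun σ => Even (negCount σ))).card : ℤ) -
        ((A.filter (fun σ => ¬ Even (negCount σ))).card : ℤ) := by
    rw [← Finset.sum_filter_add_sum_filter_not A (fun σ => Even (negCount σ))]
    rw [Finset.sum_congr rfl (fun σ hm => Even.neg_one_pow (Finset.mem_filter.mp hm).2),
      Finset.sum_congr rfl
        (fun σ hm => Odd.neg_one_pow (Nat.not_even_iff_odd.mp (Finset.mem_filter.mp hm).2))]
    rw [Finset.sum_const, Finset.sum_const]
    push_cast
    ring
  have hfixval : ∀ σ ∈ A.filter (fun σ => FixP n σ), ((-1 : ℤ)) ^ (negCount σ) = (-1) ^ k := by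
    intro σ hm
    rw [Finset.mem_filter, hA, Finset.mem_filter] at hm
    obtain ⟨⟨-, -, hdesc⟩, hfix⟩ := hm
    rw [← desc_eq_neg_of_fix hfix, hdesc]
  have hkey : ∑ σ ∈ A, ((-1 : ℤ)) ^ (negCount σ) = (-1) ^ k * (n.choose k : ℤ) := by
    rw [← Finset.sum_filter_add_sum_filter_not A (fun σ => FixP n σ),
      sum_moved_zero k A hA, add_zero, Finset.sum_congr rfl hfixval, Finset.sum_const,
      card_fix_eq_choose k A hA]
    push_cast
    ring
  rw [hD, hDt, ← hsum, hkey]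

end Stmt8Aux


theorem stmt8 (n k : ℕ) (h : k ≤ n) :
    (eulerianD n k : ℤ) - (eulerianDt n k : ℤ) = (-1) ^ k * (n.choose k : ℤ) :=
  Stmt8Aux.main_count n k
end
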